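/- arXiv:1207.2408 — 7 statements merged into one kernel-verified Lean document; each statement's English description precedes it below -/
import Mathlib

section
/- Let N ≥ 2, let Ω be a convex bounded domain in ℝ^d, and let u : Ω → ℝ^d be a bounded N-cyclically monotone vector field. Then there exists a function F : Ω × Ω → ℝ such that: (i) F is concave in the first variable and convex in the second variable; (ii) F is N-cyclically sub-antisymmetric, i.e. F(x,x)=0 for all x ∈ Ω and ∑_{i=1}^{N} F(x_i, x_{i+1}) ≤ 0 for every cyclic family x_1,…,x_N,x_{N+1}=x_1 in Ω; (iii) ⟨u(x_1), x_2 − x_1⟩ ≤ F(x_1,x_2) ≤ ⟨u(x_2), x_2 − x_1⟩ for all x_1, x_2 ∈ Ω, so that (−u(x), u(x)) belongs to the subdifferential of the concave-convex function F at (x,x) for every x ∈ Ω; and (iv) for almost every x ∈ Ω, the convex function y ↦ F(x,y) is differentiable at y = x with gradient u(x). -/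
open MeasureTheory Finset
open scoped BigOperators RealInnerProductSpace

noncomputable section

/-- `ℝ^d` as a Euclidean space. -/
abbrev Ed (d : ℕ) := EuclideanSpace ℝ (Fin d)

/-- The cyclic permutation `σ(x₁,…,x_N) = (x₂,…,x_N,x₁)` acting on tuples. -/
def cyc {N : ℕ} {α : Type*} (x : Fin N → α) : Fin N → α := x ∘ finRotate N

/-- The `(N-1)`-tuple `(u 1, …, u (N-1))` is jointly `N`-monotone on `Ω`:
for every cycle `x 1, …, x (2N-1)` of points of `Ω` with `x (N+i) = x i` for
`1 ≤ i ≤ N-1`, one has `∑_{i=1}^{N} ∑_{ℓ=1}^{N-1} ⟨u ℓ (x i), x i - x (i+ℓ)⟩ ≥ 0`. -/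
def JointlyNMonotone (N : ℕ) {d : ℕ} (Ω : Set (Ed d)) (u : ℕ → Ed d → Ed d) : Prop :=
  ∀ x : ℕ → Ed d,
    (∀ i, 1 ≤ i → i ≤ 2 * N - 1 → x i ∈ Ω) →
    (∀ i, 1 ≤ i → i ≤ N - 1 → x (N + i) = x i) →
    0 ≤ ∑ i ∈ Icc 1 N, ∑ ℓ ∈ Icc 1 (N - 1), ⟪u ℓ (x i), x i - x (i + ℓ)⟫

/-- `H` is `N`-sub-antisymmetric on `Ω^N` : `∑_{i=0}^{N-1} H(σ^i x) ≤ 0` on `Ω^N`. -/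
def NSubAntisymmetric (N : ℕ) {d : ℕ} (Ω : Set (Ed d)) (H : (Fin N → Ed d) → ℝ) : Prop :=
  ∀ x : Fin N → Ed d, (∀ i, x i ∈ Ω) → ∑ i ∈ range N, H (cyc^[i] x) ≤ 0

/-- `H` is `N`-antisymmetric on `Ω^N` : `∑_{i=0}^{N-1} H(σ^i x) = 0` on `Ω^N`. -/
def NAntisymmetric (N : ℕ) {d : ℕ} (Ω : Set (Ed d)) (H : (Fin N → Ed d) → ℝ) : Prop :=
  ∀ x : Fin N → Ed d, (∀ i, x i ∈ Ω) → ∑ i ∈ range N, H (cyc^[i] x) = 0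

/-- `u` is `N`-cyclically monotone on `Ω`: for every cycle `x 1, …, x N, x (N+1) = x 1`
of points of `Ω`, `∑_{i=1}^{N} ⟨u (x i), x i - x (i+1)⟩ ≥ 0`. -/
def NCyclicallyMonotone (N : ℕ) {d : ℕ} (Ω : Set (Ed d)) (u : Ed d → Ed d) : Prop :=
  ∀ x : ℕ → Ed d,
    (∀ i, 1 ≤ i → i ≤ N → x i ∈ Ω) → x (N + 1) = x 1 →
    0 ≤ ∑ i ∈ Icc 1 N, ⟪u (x i), x i - x (i + 1)⟫


namespace S6
open scoped NNReal ENNReal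


variable {d : ℕ}

/-! ### Elementary barycentric identities -/

lemma bary_inner {n : ℕ} {lam : ℕ → ℝ} {z : ℕ → Ed d} {x : Ed d}
    (h1 : ∑ j ∈ range n, lam j = 1) (h2 : ∑ j ∈ range n, lam j • z j = x)
    (v w : Ed d) :
    ∑ j ∈ range n, lam j * ⟪v, z j - w⟫ = ⟪v, x - w⟫ := by
  have h : ∀ j ∈ range n, lam j * ⟪v, z j - w⟫ = ⟪v, lam j • z j⟫ - lam j * ⟪v, w⟫ := by
    intro j _
    rw [inner_sub_right, real_inner_smul_right]; ring
  rw [Finset.sum_congr rfl h, Finset.sum_sub_distrib, ← inner_sum, h2, ← Finset.sum_mul, h1,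
    one_mul, inner_sub_right]

lemma bary_inner' {n : ℕ} {lam : ℕ → ℝ} {z : ℕ → Ed d} {x : Ed d}
    (h1 : ∑ j ∈ range n, lam j = 1) (h2 : ∑ j ∈ range n, lam j • z j = x)
    (v y : Ed d) :
    ∑ j ∈ range n, lam j * ⟪v, y - z j⟫ = ⟪v, y - x⟫ := by
  have h : ∀ j ∈ range n, lam j * ⟪v, y - z j⟫ = -(lam j * ⟪v, z j - y⟫) := by
    intro j _
    rw [show y - z j = -(z j - y) by abel, inner_neg_right]; ring
  rw [Finset.sum_congr rfl h, Finset.sum_neg_distrib, bary_inner h1 h2 v y,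
    show x - y = -(y - x) by abel, inner_neg_right, neg_neg]

/-! ### The decomposition set and its supremum -/

def dSet (Ω : Set (Ed d)) (u : Ed d → Ed d) (x y : Ed d) : Set ℝ :=
  {r | ∃ n : ℕ, ∃ lam : ℕ → ℝ, ∃ z : ℕ → Ed d,
    (∀ j ∈ range n, 0 ≤ lam j) ∧ (∀ j ∈ range n, z j ∈ Ω) ∧
    (∑ j ∈ range n, lam j = 1) ∧ (∑ j ∈ range n, lam j • z j = x) ∧
    r = ∑ j ∈ range n, lam j * ⟪u (z j), y - z j⟫}

variable {Ω : Set (Ed d)} {u : Ed d → Ed d}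

lemma mem_dSet_self {x : Ed d} (hx : x ∈ Ω) (y : Ed d) :
    ⟪u x, y - x⟫ ∈ dSet Ω u x y := by
  refine ⟨1, fun _ => 1, fun _ => x, ?_, ?_, ?_, ?_, ?_⟩ <;>
    simp [hx]

lemma dSet_le_bound {C R : ℝ} (hC : ∀ w ∈ Ω, ‖u w‖ ≤ C) (hR : ∀ w ∈ Ω, ‖w‖ ≤ R)
    (hC0 : 0 ≤ C) {x y : Ed d} {r : ℝ} (hr : r ∈ dSet Ω u x y) :
    r ≤ C * (‖y‖ + R) := by
  obtain ⟨n, lam, z, hpos, hmem, hl, -, rfl⟩ := hr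
  calc ∑ j ∈ range n, lam j * ⟪u (z j), y - z j⟫
      ≤ ∑ j ∈ range n, lam j * (C * (‖y‖ + R)) := by
        refine Finset.sum_le_sum fun j hj => ?_
        refine mul_le_mul_of_nonneg_left ?_ (hpos j hj)
        calc ⟪u (z j), y - z j⟫ ≤ ‖u (z j)‖ * ‖y - z j‖ := real_inner_le_norm _ _
          _ ≤ C * (‖y‖ + R) := by
            refine mul_le_mul (hC _ (hmem j hj)) ?_ (norm_nonneg _) hC0
            calc ‖y - z j‖ ≤ ‖y‖ + ‖z j‖ := norm_sub_le _ _
              _ ≤ ‖y‖ + R := by linarith [hR _ (hmem j hj)]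
    _ = C * (‖y‖ + R) := by rw [← Finset.sum_mul, hl, one_mul]

lemma bddAbove_dSet {C R : ℝ} (hC : ∀ w ∈ Ω, ‖u w‖ ≤ C) (hR : ∀ w ∈ Ω, ‖w‖ ≤ R)
    (hC0 : 0 ≤ C) (x y : Ed d) : BddAbove (dSet Ω u x y) :=
  ⟨C * (‖y‖ + R), fun _ hr => dSet_le_bound hC hR hC0 hr⟩

lemma dSet_le_inner (hmono2 : ∀ a ∈ Ω, ∀ b ∈ Ω, 0 ≤ ⟪u a - u b, a - b⟫)
    {x y : Ed d} (hy : y ∈ Ω) {r : ℝ} (hr : r ∈ dSet Ω u x y) :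
    r ≤ ⟪u y, y - x⟫ := by
  obtain ⟨n, lam, z, hpos, hmem, hl, hb, rfl⟩ := hr
  calc ∑ j ∈ range n, lam j * ⟪u (z j), y - z j⟫
      ≤ ∑ j ∈ range n, lam j * ⟪u y, y - z j⟫ := by
        refine Finset.sum_le_sum fun j hj => ?_
        refine mul_le_mul_of_nonneg_left ?_ (hpos j hj)
        have h0 := hmono2 y hy (z j) (hmem j hj)
        rw [inner_sub_left] at h0
        linarith
    _ = ⟪u y, y - x⟫ := bary_inner' hl hb _ _

/-! ### Sup-arithmetic lemmas -/

lemma weighted_csSup_le {S1 S2 : Set ℝ} (h1 : S1.Nonempty) (h2 : S2.Nonempty)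
    (b1 : BddAbove S1) (b2 : BddAbove S2) {θ θ' B : ℝ} (hθ : 0 ≤ θ) (hθ' : 0 ≤ θ')
    (h : ∀ r1 ∈ S1, ∀ r2 ∈ S2, θ * r1 + θ' * r2 ≤ B) :
    θ * sSup S1 + θ' * sSup S2 ≤ B := by
  have key1 : ∀ r1 ∈ S1, θ * r1 + θ' * sSup S2 ≤ B := by
    intro r1 hr1
    rcases eq_or_lt_of_le hθ' with hz | hpos
    · obtain ⟨r2, hr2⟩ := h2
      have := h r1 hr1 r2 hr2
      rw [← hz] at this ⊢
      simp only [zero_mul] at this ⊢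
      linarith
    · have hs : sSup S2 ≤ (B - θ * r1) / θ' := by
        refine csSup_le h2 fun r2 hr2 => ?_
        rw [le_div_iff₀ hpos]
        linarith [h r1 hr1 r2 hr2]
      have := mul_le_mul_of_nonneg_left hs hθ'
      rw [mul_div_cancel₀ _ (ne_of_gt hpos)] at this
      linarith
  rcases eq_or_lt_of_le hθ with hz | hpos
  · obtain ⟨r1, hr1⟩ := h1
    have := key1 r1 hr1
    rw [← hz] at this ⊢
    simp only [zero_mul] at this ⊢
    linarith
  · have hs : sSup S1 ≤ (B - θ' * sSup S2) / θ := by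
      refine csSup_le h1 fun r1 hr1 => ?_
      rw [le_div_iff₀ hpos]
      linarith [key1 r1 hr1]
    have := mul_le_mul_of_nonneg_left hs hθ
    rw [mul_div_cancel₀ _ (ne_of_gt hpos)] at this
    linarith

lemma sum_csSup_le {S : ℕ → Set ℝ} :
    ∀ (s : Finset ℕ) (B : ℝ), (∀ i ∈ s, (S i).Nonempty) → (∀ i ∈ s, BddAbove (S i)) →
    (∀ r : ℕ → ℝ, (∀ i ∈ s, r i ∈ S i) → ∑ i ∈ s, r i ≤ B) →
    ∑ i ∈ s, sSup (S i) ≤ B := by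
  classical
  intro s
  induction s using Finset.induction_on with
  | empty => intro B _ _ h; simpa using h (fun _ => 0) (by simp)
  | @insert a s ha IH =>
    intro B hne hbdd h
    rw [Finset.sum_insert ha]
    have key : sSup (S a) ≤ B - ∑ i ∈ s, sSup (S i) := by
      refine csSup_le (hne a (Finset.mem_insert_self a s)) fun ra hra => ?_
      have h2 : ∑ i ∈ s, sSup (S i) ≤ B - ra := by
        refine IH (B - ra) (fun i hi => hne i (Finset.mem_insert_of_mem hi))
          (fun i hi => hbdd i (Finset.mem_insert_of_mem hi)) ?_
        intro r hr
        have := h (Function.update r a ra) ?_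
        · rw [Finset.sum_insert ha, Function.update_self] at this
          have heq : ∑ i ∈ s, Function.update r a ra i = ∑ i ∈ s, r i := by
            refine Finset.sum_congr rfl fun i hi => ?_
            exact Function.update_of_ne (ne_of_mem_of_not_mem hi ha) _ _
          rw [heq] at this
          linarith
        · intro i hi
          rcases Finset.mem_insert.mp hi with rfl | hi'
          · rw [Function.update_self]; exact hra
          · rw [Function.update_of_ne (ne_of_mem_of_not_mem hi' ha) _ _]
            exact hr i hi'
      linarith
    linarith

/-! ### 2-monotonicity from `N`-cyclic monotonicity -/

def NCyclicallyMonotone' (N : ℕ) (Ω : Set (Ed d)) (u : Ed d → Ed d) : Prop :=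
  ∀ x : ℕ → Ed d,
    (∀ i, 1 ≤ i → i ≤ N → x i ∈ Ω) → x (N + 1) = x 1 →
    0 ≤ ∑ i ∈ Icc 1 N, ⟪u (x i), x i - x (i + 1)⟫

lemma mono2 {N : ℕ} (hN : 2 ≤ N) (hmono : NCyclicallyMonotone' N Ω u) :
    ∀ a ∈ Ω, ∀ b ∈ Ω, 0 ≤ ⟪u a - u b, a - b⟫ := by
  classical
  intro a ha b hb
  have key : ∀ (x : ℕ → Ed d), (∀ i, (i = 1 ∨ i = N + 1) → x i = a) →
      (∀ i, ¬(i = 1 ∨ i = N + 1) → x i = b) →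
      0 ≤ ⟪u a, a - b⟫ + ⟪u b, b - a⟫ := by
    intro x hxa hxb
    have hx1 : x 1 = a := hxa 1 (Or.inl rfl)
    have hxN1 : x (N + 1) = a := hxa (N + 1) (Or.inr rfl)
    have hmem : ∀ i, 1 ≤ i → i ≤ N → x i ∈ Ω := by
      intro i h1 h2
      by_cases h : i = 1 ∨ i = N + 1
      · rw [hxa i h]; exact ha
      · rw [hxb i h]; exact hb
    have hsum := hmono x hmem (by rw [hx1, hxN1])
    have hterm : ∀ i ∈ Icc 1 N, ⟪u (x i), x i - x (i + 1)⟫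
        = (if i = 1 then ⟪u a, a - b⟫ else 0) + (if i = N then ⟪u b, b - a⟫ else 0) := by
      intro i hi
      obtain ⟨hi1, hiN⟩ := Finset.mem_Icc.mp hi
      by_cases h1 : i = 1
      · have hN' : i ≠ N := by omega
        have hx2 : x (i + 1) = b := hxb (i + 1) (by omega)
        rw [if_pos h1, if_neg hN', add_zero, hx2, h1, hx1]
      · by_cases hn : i = N
        · have hxNv : x i = b := hxb i (by omega)
          have hxi1 : x (i + 1) = a := hxa (i + 1) (by omega)
          rw [if_neg h1, if_pos hn, zero_add, hxNv, hxi1]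
        · have hxi : x i = b := hxb i (by omega)
          have hxi1 : x (i + 1) = b := hxb (i + 1) (by omega)
          rw [if_neg h1, if_neg hn, add_zero, hxi, hxi1, sub_self, inner_zero_right]
    rw [Finset.sum_congr rfl hterm, Finset.sum_add_distrib] at hsum
    have m1 : (1:ℕ) ∈ Icc 1 N := Finset.mem_Icc.mpr ⟨le_refl 1, by omega⟩
    have mN : N ∈ Icc 1 N := Finset.mem_Icc.mpr ⟨by omega, le_refl N⟩
    have e1 : ∑ i ∈ Icc 1 N, (if i = 1 then ⟪u a, a - b⟫ else 0) = ⟪u a, a - b⟫ := by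
      rw [Finset.sum_ite_eq' (Icc 1 N) 1 (fun _ => ⟪u a, a - b⟫), if_pos m1]
    have e2 : ∑ i ∈ Icc 1 N, (if i = N then ⟪u b, b - a⟫ else 0) = ⟪u b, b - a⟫ := by
      rw [Finset.sum_ite_eq' (Icc 1 N) N (fun _ => ⟪u b, b - a⟫), if_pos mN]
    rw [e1, e2] at hsum
    exact hsum
  have h0 := key (fun i => if i = 1 ∨ i = N + 1 then a else b)
    (fun i h => if_pos h) (fun i h => if_neg h)
  have : ⟪u b, b - a⟫ = -⟪u b, a - b⟫ := by
    rw [show b - a = -(a-b) by abel, inner_neg_right]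
  rw [inner_sub_left]
  rw [this] at h0
  linarith

/-! ### The key cyclic inequality -/

def modX (i₀ N : ℕ) (w : Ed d) (x : ℕ → Ed d) : ℕ → Ed d :=
  fun i => if i = i₀ ∨ (i₀ = 1 ∧ i = N + 1) then w else x i

def modN (i₀ : ℕ) (n : ℕ → ℕ) : ℕ → ℕ := fun i => if i = i₀ then 1 else n i

def modLam (i₀ : ℕ) (lam : ℕ → ℕ → ℝ) : ℕ → ℕ → ℝ :=
  fun i k => if i = i₀ then 1 else lam i k

def modZ (i₀ : ℕ) (w : Ed d) (z : ℕ → ℕ → Ed d) : ℕ → ℕ → Ed d :=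
  fun i k => if i = i₀ then w else z i k

lemma modX_pos {i₀ N : ℕ} {w : Ed d} {x : ℕ → Ed d} {i : ℕ}
    (h : i = i₀ ∨ (i₀ = 1 ∧ i = N + 1)) : modX i₀ N w x i = w := if_pos h

lemma modX_neg {i₀ N : ℕ} {w : Ed d} {x : ℕ → Ed d} {i : ℕ}
    (h : ¬(i = i₀ ∨ (i₀ = 1 ∧ i = N + 1))) : modX i₀ N w x i = x i := if_neg h

lemma modN_self {i₀ : ℕ} {n : ℕ → ℕ} : modN i₀ n i₀ = 1 := if_pos rfl

lemma modN_ne {i₀ i : ℕ} {n : ℕ → ℕ} (h : i ≠ i₀) : modN i₀ n i = n i := if_neg h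

lemma modLam_self {i₀ : ℕ} {lam : ℕ → ℕ → ℝ} (k : ℕ) : modLam i₀ lam i₀ k = 1 := if_pos rfl

lemma modLam_ne {i₀ i : ℕ} {lam : ℕ → ℕ → ℝ} (h : i ≠ i₀) (k : ℕ) :
    modLam i₀ lam i k = lam i k := if_neg h

lemma modZ_self {i₀ : ℕ} {w : Ed d} {z : ℕ → ℕ → Ed d} (k : ℕ) : modZ i₀ w z i₀ k = w :=
  if_pos rfl

lemma modZ_ne {i₀ i : ℕ} {w : Ed d} {z : ℕ → ℕ → Ed d} (h : i ≠ i₀) (k : ℕ) :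
    modZ i₀ w z i k = z i k := if_neg h

lemma cyclic_core {N : ℕ} (hN : 2 ≤ N) (hmono : NCyclicallyMonotone' N Ω u) :
    ∀ (m : ℕ) (x : ℕ → Ed d), (∀ i, 1 ≤ i → i ≤ N → x i ∈ Ω) → x (N + 1) = x 1 →
      ∀ (n : ℕ → ℕ) (lam : ℕ → ℕ → ℝ) (z : ℕ → ℕ → Ed d),
      (∀ i ∈ Icc 1 N, (∀ j ∈ range (n i), 0 ≤ lam i j) ∧
        (∀ j ∈ range (n i), z i j ∈ Ω) ∧
        (∑ j ∈ range (n i), lam i j = 1) ∧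
        (∑ j ∈ range (n i), lam i j • z i j = x i)) →
      (∀ i ∈ Icc 1 N, m < i → n i = 1 ∧ z i 0 = x i) →
      ∑ i ∈ Icc 1 N, ∑ j ∈ range (n i), lam i j * ⟪u (z i j), x (i + 1) - z i j⟫ ≤ 0 := by
  classical
  intro m
  induction m with
  | zero =>
    intro x hx hcyc n lam z hdec htriv
    have hs : ∀ i ∈ Icc 1 N, ∑ j ∈ range (n i), lam i j * ⟪u (z i j), x (i + 1) - z i j⟫
        = ⟪u (x i), x (i + 1) - x i⟫ := by
      intro i hi
      obtain ⟨hn1, hz0⟩ := htriv i hi (Finset.mem_Icc.mp hi).1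
      obtain ⟨-, -, hl1, -⟩ := hdec i hi
      rw [hn1] at hl1 ⊢
      rw [Finset.sum_range_one] at hl1 ⊢
      rw [hl1, one_mul, hz0]
    rw [Finset.sum_congr rfl hs]
    have h2 : ∀ i ∈ Icc 1 N, ⟪u (x i), x (i + 1) - x i⟫ = -⟪u (x i), x i - x (i + 1)⟫ := by
      intro i _
      rw [show x (i+1) - x i = -(x i - x (i+1)) by abel, inner_neg_right]
    rw [Finset.sum_congr rfl h2, Finset.sum_neg_distrib]
    have := hmono x hx hcyc
    linarith
  | succ m IH =>
    intro x hx hcyc n lam z hdec htriv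
    by_cases hcase : N < m + 1
    · refine IH x hx hcyc n lam z hdec ?_
      intro i hi _
      exact absurd ((Finset.mem_Icc.mp hi).2) (by omega)
    · push_neg at hcase
      set i₀ := m + 1 with hi₀def
      have hi₀ : i₀ ∈ Icc 1 N := Finset.mem_Icc.mpr ⟨by omega, hcase⟩
      obtain ⟨hpos₀, hmem₀, hl₀, hb₀⟩ := hdec i₀ hi₀
      -- each modified configuration satisfies the inequality, by the inductive hypothesis
      have hE' : ∀ j ∈ range (n i₀),
          ∑ i ∈ Icc 1 N, ∑ k ∈ range (modN i₀ n i),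
            modLam i₀ lam i k *
              ⟪u (modZ i₀ (z i₀ j) z i k), modX i₀ N (z i₀ j) x (i + 1) - modZ i₀ (z i₀ j) z i k⟫
            ≤ 0 := by
        intro j hj
        have hzj : z i₀ j ∈ Ω := hmem₀ j hj
        refine IH (modX i₀ N (z i₀ j) x) ?_ ?_ (modN i₀ n) (modLam i₀ lam)
          (modZ i₀ (z i₀ j) z) ?_ ?_
        · intro i h1 h2
          by_cases h : i = i₀ ∨ (i₀ = 1 ∧ i = N + 1)
          · rw [modX_pos h]; exact hzj
          · rw [modX_neg h]; exact hx i h1 h2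
        · by_cases h : i₀ = 1
          · rw [modX_pos (Or.inr ⟨h, rfl⟩), modX_pos (Or.inl h.symm)]
          · have hA : ¬(N + 1 = i₀ ∨ (i₀ = 1 ∧ N + 1 = N + 1)) := by
              have := (Finset.mem_Icc.mp hi₀).2; omega
            have hB : ¬(1 = i₀ ∨ (i₀ = 1 ∧ 1 = N + 1)) := by omega
            rw [modX_neg hA, modX_neg hB, hcyc]
        · intro i hi
          by_cases h : i = i₀
          · subst h
            rw [modN_self]
            refine ⟨?_, ?_, ?_, ?_⟩
            · intro k _; rw [modLam_self]; exact zero_le_one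
            · intro k _; rw [modZ_self]; exact hzj
            · rw [Finset.sum_range_one, modLam_self]
            · rw [Finset.sum_range_one, modLam_self, modZ_self, one_smul,
                modX_pos (Or.inl rfl)]
          · obtain ⟨ha, hb, hc, hd⟩ := hdec i hi
            have hii : ¬(i = i₀ ∨ (i₀ = 1 ∧ i = N + 1)) := by
              have := (Finset.mem_Icc.mp hi).2; omega
            rw [modN_ne h]
            refine ⟨?_, ?_, ?_, ?_⟩
            · intro k hk; rw [modLam_ne h]; exact ha k hk
            · intro k hk; rw [modZ_ne h]; exact hb k hk
            · calc ∑ k ∈ range (n i), modLam i₀ lam i k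
                  = ∑ k ∈ range (n i), lam i k :=
                    Finset.sum_congr rfl fun k _ => modLam_ne h k
                _ = 1 := hc
            · calc ∑ k ∈ range (n i), modLam i₀ lam i k • modZ i₀ (z i₀ j) z i k
                  = ∑ k ∈ range (n i), lam i k • z i k := by
                    refine Finset.sum_congr rfl fun k _ => ?_
                    rw [modLam_ne h, modZ_ne h]
                _ = modX i₀ N (z i₀ j) x i := by rw [hd, modX_neg hii]
        · intro i hi him
          by_cases h : i = i₀
          · subst h
            exact ⟨modN_self, by rw [modZ_self, modX_pos (Or.inl rfl)]⟩
          · have hii : ¬(i = i₀ ∨ (i₀ = 1 ∧ i = N + 1)) := by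
              have := (Finset.mem_Icc.mp hi).2; omega
            obtain ⟨hn1, hz0⟩ := htriv i hi (by omega)
            exact ⟨by rw [modN_ne h]; exact hn1,
              by rw [modZ_ne h, modX_neg hii]; exact hz0⟩
      -- the per-index identity
      have hper : ∀ i ∈ Icc 1 N,
          ∑ j ∈ range (n i), lam i j * ⟪u (z i j), x (i + 1) - z i j⟫
          = ∑ j ∈ range (n i₀), lam i₀ j *
              (∑ k ∈ range (modN i₀ n i), modLam i₀ lam i k *
                ⟪u (modZ i₀ (z i₀ j) z i k),
                  modX i₀ N (z i₀ j) x (i + 1) - modZ i₀ (z i₀ j) z i k⟫) := by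
        intro i hi
        by_cases h : i = i₀
        · subst h
          refine Finset.sum_congr rfl fun j hj => ?_
          have hx1 : modX i₀ N (z i₀ j) x (i₀ + 1) = x (i₀ + 1) := by
            refine modX_neg ?_
            have := (Finset.mem_Icc.mp hi).2
            omega
          rw [modN_self, Finset.sum_range_one, modLam_self, modZ_self, one_mul, hx1]
        · have hne : i ≠ i₀ := h
          by_cases hhit : i + 1 = i₀ ∨ (i₀ = 1 ∧ i + 1 = N + 1)
          · -- the target of edge i is the modified point
            have hxA : ∀ j, modX i₀ N (z i₀ j) x (i + 1) = z i₀ j := fun j => modX_pos hhit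
            have hxi₀ : x (i + 1) = x i₀ := by
              rcases hhit with h1 | ⟨h1, h2⟩
              · rw [h1]
              · rw [h2, hcyc, h1]
            calc ∑ j ∈ range (n i), lam i j * ⟪u (z i j), x (i + 1) - z i j⟫
                = ∑ k ∈ range (n i), lam i k * ⟪u (z i k), x i₀ - z i k⟫ := by
                  rw [hxi₀]
              _ = ∑ k ∈ range (n i), lam i k *
                    (∑ j ∈ range (n i₀), lam i₀ j * ⟪u (z i k), z i₀ j - z i k⟫) := by
                  refine Finset.sum_congr rfl fun k _ => ?_
                  rw [bary_inner hl₀ hb₀]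
              _ = ∑ k ∈ range (n i), ∑ j ∈ range (n i₀),
                    lam i₀ j * (lam i k * ⟪u (z i k), z i₀ j - z i k⟫) := by
                  refine Finset.sum_congr rfl fun k _ => ?_
                  rw [Finset.mul_sum]
                  refine Finset.sum_congr rfl fun j _ => ?_
                  ring
              _ = ∑ j ∈ range (n i₀), ∑ k ∈ range (n i),
                    lam i₀ j * (lam i k * ⟪u (z i k), z i₀ j - z i k⟫) := Finset.sum_comm
              _ = ∑ j ∈ range (n i₀), lam i₀ j *
                    (∑ k ∈ range (modN i₀ n i), modLam i₀ lam i k *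
                      ⟪u (modZ i₀ (z i₀ j) z i k),
                        modX i₀ N (z i₀ j) x (i + 1) - modZ i₀ (z i₀ j) z i k⟫) := by
                  refine Finset.sum_congr rfl fun j _ => ?_
                  rw [← Finset.mul_sum, modN_ne hne]
                  congr 1
                  refine Finset.sum_congr rfl fun k _ => ?_
                  rw [modLam_ne hne, modZ_ne hne, hxA j]
          · -- the target of edge i is unchanged
            have hxB : ∀ j, modX i₀ N (z i₀ j) x (i + 1) = x (i + 1) := fun j => modX_neg hhit
            have hconst : ∀ j, (∑ k ∈ range (modN i₀ n i), modLam i₀ lam i k *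
                ⟪u (modZ i₀ (z i₀ j) z i k),
                  modX i₀ N (z i₀ j) x (i + 1) - modZ i₀ (z i₀ j) z i k⟫)
                = ∑ k ∈ range (n i), lam i k * ⟪u (z i k), x (i + 1) - z i k⟫ := by
              intro j
              rw [modN_ne hne]
              refine Finset.sum_congr rfl fun k _ => ?_
              rw [modLam_ne hne, modZ_ne hne, hxB j]
            calc ∑ j ∈ range (n i), lam i j * ⟪u (z i j), x (i + 1) - z i j⟫
                = (∑ j ∈ range (n i₀), lam i₀ j) *
                    (∑ k ∈ range (n i), lam i k * ⟪u (z i k), x (i + 1) - z i k⟫) := by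
                  rw [hl₀, one_mul]
              _ = ∑ j ∈ range (n i₀), lam i₀ j *
                    (∑ k ∈ range (n i), lam i k * ⟪u (z i k), x (i + 1) - z i k⟫) :=
                  Finset.sum_mul _ _ _
              _ = _ := by
                  refine Finset.sum_congr rfl fun j _ => ?_
                  rw [hconst j]
      -- put everything together
      calc ∑ i ∈ Icc 1 N, ∑ j ∈ range (n i), lam i j * ⟪u (z i j), x (i + 1) - z i j⟫
          = ∑ i ∈ Icc 1 N, ∑ j ∈ range (n i₀), lam i₀ j *
              (∑ k ∈ range (modN i₀ n i), modLam i₀ lam i k *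
                ⟪u (modZ i₀ (z i₀ j) z i k),
                  modX i₀ N (z i₀ j) x (i + 1) - modZ i₀ (z i₀ j) z i k⟫) :=
            Finset.sum_congr rfl hper
        _ = ∑ j ∈ range (n i₀), ∑ i ∈ Icc 1 N, lam i₀ j *
              (∑ k ∈ range (modN i₀ n i), modLam i₀ lam i k *
                ⟪u (modZ i₀ (z i₀ j) z i k),
                  modX i₀ N (z i₀ j) x (i + 1) - modZ i₀ (z i₀ j) z i k⟫) := Finset.sum_comm
        _ = ∑ j ∈ range (n i₀), lam i₀ j *
              (∑ i ∈ Icc 1 N, ∑ k ∈ range (modN i₀ n i), modLam i₀ lam i k *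
                ⟪u (modZ i₀ (z i₀ j) z i k),
                  modX i₀ N (z i₀ j) x (i + 1) - modZ i₀ (z i₀ j) z i k⟫) := by
            refine Finset.sum_congr rfl fun j _ => ?_
            rw [Finset.mul_sum]
        _ ≤ 0 := Finset.sum_nonpos fun j hj =>
            mul_nonpos_of_nonneg_of_nonpos (hpos₀ j hj) (hE' j hj)

/-! ### The function `F` -/

def FF (Ω : Set (Ed d)) (u : Ed d → Ed d) (x y : Ed d) : ℝ := sSup (dSet Ω u x y)

section FFprops

variable {C R : ℝ}
variable (hC : ∀ w ∈ Ω, ‖u w‖ ≤ C) (hR : ∀ w ∈ Ω, ‖w‖ ≤ R) (hC0 : 0 ≤ C)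
variable (hmono2 : ∀ a ∈ Ω, ∀ b ∈ Ω, 0 ≤ ⟪u a - u b, a - b⟫)

include hC hR hC0

lemma FF_lower {x y : Ed d} (hx : x ∈ Ω) :
    ⟪u x, y - x⟫ ≤ FF Ω u x y :=
  le_csSup (bddAbove_dSet hC hR hC0 x y) (mem_dSet_self hx y)

include hmono2

lemma FF_upper {x y : Ed d} (hx : x ∈ Ω) (hy : y ∈ Ω) :
    FF Ω u x y ≤ ⟪u y, y - x⟫ :=
  csSup_le ⟨_, mem_dSet_self hx y⟩ fun _ hr => dSet_le_inner hmono2 hy hr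

lemma FF_diag {x : Ed d} (hx : x ∈ Ω) : FF Ω u x x = 0 := by
  have h1 := FF_lower hC hR hC0 (y := x) hx
  have h2 := FF_upper hC hR hC0 hmono2 hx hx
  simp only [sub_self, inner_zero_right] at h1 h2
  linarith

end FFprops

lemma FF_convexOn {C R : ℝ} (hC : ∀ w ∈ Ω, ‖u w‖ ≤ C) (hR : ∀ w ∈ Ω, ‖w‖ ≤ R)
    (hC0 : 0 ≤ C) (hΩconv : Convex ℝ Ω) {x : Ed d} (hx : x ∈ Ω) :
    ConvexOn ℝ Ω (fun y => FF Ω u x y) := by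
  refine ⟨hΩconv, fun y₁ hy₁ y₂ hy₂ θ θ' hθ hθ' hsum => ?_⟩
  refine csSup_le ⟨_, mem_dSet_self hx _⟩ fun r hr => ?_
  obtain ⟨n, lam, z, hpos, hmem, hl, hb, rfl⟩ := hr
  have hsplit : ∑ j ∈ range n, lam j * ⟪u (z j), (θ • y₁ + θ' • y₂) - z j⟫
      = θ * (∑ j ∈ range n, lam j * ⟪u (z j), y₁ - z j⟫)
        + θ' * (∑ j ∈ range n, lam j * ⟪u (z j), y₂ - z j⟫) := by
    rw [Finset.mul_sum, Finset.mul_sum, ← Finset.sum_add_distrib]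
    refine Finset.sum_congr rfl fun j _ => ?_
    have : (θ • y₁ + θ' • y₂) - z j = θ • (y₁ - z j) + θ' • (y₂ - z j) := by
      rw [smul_sub, smul_sub]
      rw [show θ • y₁ - θ • z j + (θ' • y₂ - θ' • z j)
          = θ • y₁ + θ' • y₂ - (θ • z j + θ' • z j) by abel]
      congr 1
      rw [← add_smul, hsum, one_smul]
    rw [this, inner_add_right, real_inner_smul_right, real_inner_smul_right]
    ring
  rw [hsplit]
  have m1 : (∑ j ∈ range n, lam j * ⟪u (z j), y₁ - z j⟫) ∈ dSet Ω u x y₁ :=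
    ⟨n, lam, z, hpos, hmem, hl, hb, rfl⟩
  have m2 : (∑ j ∈ range n, lam j * ⟪u (z j), y₂ - z j⟫) ∈ dSet Ω u x y₂ :=
    ⟨n, lam, z, hpos, hmem, hl, hb, rfl⟩
  have l1 := le_csSup (bddAbove_dSet hC hR hC0 x y₁) m1
  have l2 := le_csSup (bddAbove_dSet hC hR hC0 x y₂) m2
  have := add_le_add (mul_le_mul_of_nonneg_left l1 hθ) (mul_le_mul_of_nonneg_left l2 hθ')
  exact this

lemma dSet_combo {x₁ x₂ y : Ed d} {θ θ' : ℝ} (hθ : 0 ≤ θ) (hθ' : 0 ≤ θ')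
    (hsum : θ + θ' = 1) {r₁ r₂ : ℝ} (h₁ : r₁ ∈ dSet Ω u x₁ y) (h₂ : r₂ ∈ dSet Ω u x₂ y) :
    θ * r₁ + θ' * r₂ ∈ dSet Ω u (θ • x₁ + θ' • x₂) y := by
  obtain ⟨n₁, lam₁, z₁, hpos₁, hmem₁, hl₁, hb₁, rfl⟩ := h₁
  obtain ⟨n₂, lam₂, z₂, hpos₂, hmem₂, hl₂, hb₂, rfl⟩ := h₂
  classical
  refine ⟨n₁ + n₂, fun j => if j < n₁ then θ * lam₁ j else θ' * lam₂ (j - n₁),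
    fun j => if j < n₁ then z₁ j else z₂ (j - n₁), ?_, ?_, ?_, ?_, ?_⟩
  · intro j _
    dsimp only
    by_cases h : j < n₁
    · rw [if_pos h]; exact mul_nonneg hθ (hpos₁ j (Finset.mem_range.mpr h))
    · rw [if_neg h]
      push_neg at h
      refine mul_nonneg hθ' (hpos₂ _ ?_)
      have := Finset.mem_range.mp ‹j ∈ range (n₁ + n₂)›
      exact Finset.mem_range.mpr (by omega)
  · intro j hj
    dsimp only
    by_cases h : j < n₁
    · rw [if_pos h]; exact hmem₁ j (Finset.mem_range.mpr h)
    · rw [if_neg h]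
      push_neg at h
      have := Finset.mem_range.mp hj
      exact hmem₂ _ (Finset.mem_range.mpr (by omega))
  · rw [Finset.sum_range_add]
    have e1 : ∑ j ∈ range n₁, (if j < n₁ then θ * lam₁ j else θ' * lam₂ (j - n₁))
        = θ * ∑ j ∈ range n₁, lam₁ j := by
      rw [Finset.mul_sum]
      exact Finset.sum_congr rfl fun j hj => if_pos (Finset.mem_range.mp hj)
    have e2 : ∑ j ∈ range n₂,
        (if n₁ + j < n₁ then θ * lam₁ (n₁ + j) else θ' * lam₂ (n₁ + j - n₁))
        = θ' * ∑ j ∈ range n₂, lam₂ j := by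
      rw [Finset.mul_sum]
      refine Finset.sum_congr rfl fun j hj => ?_
      rw [if_neg (by omega), Nat.add_sub_cancel_left]
    rw [e1, e2, hl₁, hl₂, mul_one, mul_one, hsum]
  · rw [Finset.sum_range_add]
    have e1 : ∑ j ∈ range n₁, ((if j < n₁ then θ * lam₁ j else θ' * lam₂ (j - n₁)) •
        (if j < n₁ then z₁ j else z₂ (j - n₁))) = θ • ∑ j ∈ range n₁, lam₁ j • z₁ j := by
      rw [Finset.smul_sum]
      refine Finset.sum_congr rfl fun j hj => ?_
      rw [if_pos (Finset.mem_range.mp hj), if_pos (Finset.mem_range.mp hj), smul_smul]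
    have e2 : ∑ j ∈ range n₂,
        ((if n₁ + j < n₁ then θ * lam₁ (n₁ + j) else θ' * lam₂ (n₁ + j - n₁)) •
          (if n₁ + j < n₁ then z₁ (n₁ + j) else z₂ (n₁ + j - n₁)))
        = θ' • ∑ j ∈ range n₂, lam₂ j • z₂ j := by
      rw [Finset.smul_sum]
      refine Finset.sum_congr rfl fun j hj => ?_
      rw [if_neg (by omega), if_neg (by omega), Nat.add_sub_cancel_left, smul_smul]
    rw [e1, e2, hb₁, hb₂]
  · rw [Finset.sum_range_add]
    have e1 : ∑ j ∈ range n₁, ((if j < n₁ then θ * lam₁ j else θ' * lam₂ (j - n₁)) *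
        ⟪u (if j < n₁ then z₁ j else z₂ (j - n₁)), y - (if j < n₁ then z₁ j else z₂ (j - n₁))⟫)
        = θ * ∑ j ∈ range n₁, lam₁ j * ⟪u (z₁ j), y - z₁ j⟫ := by
      rw [Finset.mul_sum]
      refine Finset.sum_congr rfl fun j hj => ?_
      rw [if_pos (Finset.mem_range.mp hj), if_pos (Finset.mem_range.mp hj)]
      ring
    have e2 : ∑ j ∈ range n₂,
        ((if n₁ + j < n₁ then θ * lam₁ (n₁ + j) else θ' * lam₂ (n₁ + j - n₁)) *
          ⟪u (if n₁ + j < n₁ then z₁ (n₁ + j) else z₂ (n₁ + j - n₁)),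
            y - (if n₁ + j < n₁ then z₁ (n₁ + j) else z₂ (n₁ + j - n₁))⟫)
        = θ' * ∑ j ∈ range n₂, lam₂ j * ⟪u (z₂ j), y - z₂ j⟫ := by
      rw [Finset.mul_sum]
      refine Finset.sum_congr rfl fun j hj => ?_
      rw [if_neg (by omega), if_neg (by omega), Nat.add_sub_cancel_left]
      ring
    rw [e1, e2]

lemma FF_concaveOn {C R : ℝ} (hC : ∀ w ∈ Ω, ‖u w‖ ≤ C) (hR : ∀ w ∈ Ω, ‖w‖ ≤ R)
    (hC0 : 0 ≤ C) (hΩconv : Convex ℝ Ω) (y : Ed d) :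
    ConcaveOn ℝ Ω (fun x => FF Ω u x y) := by
  refine ⟨hΩconv, fun x₁ hx₁ x₂ hx₂ θ θ' hθ hθ' hsum => ?_⟩
  have hmix : θ • x₁ + θ' • x₂ ∈ Ω := hΩconv hx₁ hx₂ hθ hθ' hsum
  refine weighted_csSup_le ⟨_, mem_dSet_self hx₁ y⟩ ⟨_, mem_dSet_self hx₂ y⟩
    (bddAbove_dSet hC hR hC0 x₁ y) (bddAbove_dSet hC hR hC0 x₂ y) hθ hθ' ?_
  intro r₁ hr₁ r₂ hr₂
  exact le_csSup (bddAbove_dSet hC hR hC0 _ y) (dSet_combo hθ hθ' hsum hr₁ hr₂)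

lemma FF_cyclic {N : ℕ} {C R : ℝ} (hC : ∀ w ∈ Ω, ‖u w‖ ≤ C) (hR : ∀ w ∈ Ω, ‖w‖ ≤ R)
    (hC0 : 0 ≤ C) (hN : 2 ≤ N) (hmono : NCyclicallyMonotone' N Ω u)
    (x : ℕ → Ed d) (hx : ∀ i, 1 ≤ i → i ≤ N → x i ∈ Ω) (hcyc : x (N + 1) = x 1) :
    ∑ i ∈ Icc 1 N, FF Ω u (x i) (x (i + 1)) ≤ 0 := by
  classical
  refine sum_csSup_le (S := fun i => dSet Ω u (x i) (x (i + 1))) (Icc 1 N) 0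
    (fun i hi => ⟨_, mem_dSet_self (hx i (Finset.mem_Icc.mp hi).1 (Finset.mem_Icc.mp hi).2) _⟩)
    (fun i hi => bddAbove_dSet hC hR hC0 _ _) ?_
  intro r hr
  have hex : ∀ i, ∃ (nn : ℕ) (ll : ℕ → ℝ) (zz : ℕ → Ed d), i ∈ Icc 1 N →
      ((∀ j ∈ range nn, 0 ≤ ll j) ∧ (∀ j ∈ range nn, zz j ∈ Ω) ∧
       (∑ j ∈ range nn, ll j = 1) ∧ (∑ j ∈ range nn, ll j • zz j = x i) ∧
       r i = ∑ j ∈ range nn, ll j * ⟪u (zz j), x (i + 1) - zz j⟫) := by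
    intro i
    by_cases hi : i ∈ Icc 1 N
    · obtain ⟨nn, ll, zz, h1, h2, h3, h4, h5⟩ := hr i hi
      exact ⟨nn, ll, zz, fun _ => ⟨h1, h2, h3, h4, h5⟩⟩
    · exact ⟨1, fun _ => 1, fun _ => 0, fun h => absurd h hi⟩
  choose nn ll zz hh using hex
  have heq : ∀ i ∈ Icc 1 N, r i
      = ∑ j ∈ range (nn i), ll i j * ⟪u (zz i j), x (i + 1) - zz i j⟫ := by
    intro i hi; exact (hh i hi).2.2.2.2
  rw [Finset.sum_congr rfl heq]
  exact cyclic_core hN hmono N x hx hcyc nn ll zz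
    (fun i hi => ⟨(hh i hi).1, (hh i hi).2.1, (hh i hi).2.2.1, (hh i hi).2.2.2.1⟩)
    (fun i hi hNi => absurd (Finset.mem_Icc.mp hi).2 (by omega))



variable {d : ℕ}

/-- Transfer of null sets through a measure-preserving equivalence. -/
lemma mp_image_null {α β : Type*} [MeasurableSpace α] [MeasurableSpace β]
    {μ : Measure α} {ν : Measure β} (e : α ≃ᵐ β) (h : MeasurePreserving e μ ν)
    {A : Set α} (hA : μ A = 0) : ν (⇑e '' A) = 0 := by
  have h1 : ⇑e '' A ⊆ ⇑e '' (toMeasurable μ A) :=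
    Set.image_mono (subset_toMeasurable μ A)
  refine measure_mono_null h1 ?_
  have h2 : ⇑e '' (toMeasurable μ A) = ⇑e.symm ⁻¹' (toMeasurable μ A) := by
    rw [MeasurableEquiv.image_eq_preimage_symm]
  rw [h2]
  rw [(h.symm e).measure_preimage (measurableSet_toMeasurable μ A).nullMeasurableSet]
  rw [measure_toMeasurable]
  exact hA

/-- A Lipschitz self-map of `ℝ^d` maps null sets to null sets. -/
lemma lipschitz_image_null {f : Ed d → Ed d} {K : ℝ≥0} (hf : LipschitzWith K f)
    {s : Set (Ed d)} (hs : volume s = 0) : volume (f '' s) = 0 := by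
  set e := (MeasurableEquiv.toLp 2 (Fin d → ℝ)).symm with he
  have hmp : MeasurePreserving e := EuclideanSpace.volume_preserving_symm_measurableEquiv_toLp (Fin d)
  -- the conjugated map on `Fin d → ℝ`
  set g : (Fin d → ℝ) → (Fin d → ℝ) := fun v => e (f (e.symm v)) with hg
  have lip_e : LipschitzWith 1 (⇑e) := by
    exact PiLp.lipschitzWith_ofLp 2 (fun _ : Fin d => ℝ)
  obtain ⟨K₂, lip_esymm⟩ : ∃ K₂ : ℝ≥0, LipschitzWith K₂ (⇑e.symm) := by
    refine ⟨_, (PiLp.antilipschitzWith_ofLp 2 (fun _ : Fin d => ℝ)).to_rightInverse ?_⟩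
    intro v
    rfl
  have lip_g : LipschitzWith (1 * (K * K₂)) g :=
    lip_e.comp (hf.comp lip_esymm)
  -- transfer the null set
  have hs' : volume (⇑e '' s) = 0 := mp_image_null e hmp hs
  have hH : μH[(Fintype.card (Fin d) : ℝ)] (⇑e '' s) = 0 := by
    rw [hausdorffMeasure_pi_real]; exact hs'
  have himg : μH[(Fintype.card (Fin d) : ℝ)] (g '' (⇑e '' s)) = 0 := by
    have hb := lip_g.hausdorffMeasure_image_le
      (by positivity : (0:ℝ) ≤ (Fintype.card (Fin d) : ℝ)) (⇑e '' s)
    rw [hH, mul_zero] at hb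
    exact le_antisymm hb (zero_le (α := ℝ≥0∞))
  have hset : g '' (⇑e '' s) = ⇑e '' (f '' s) := by
    rw [← Set.image_comp, ← Set.image_comp]
    refine Set.image_congr fun w _ => ?_
    show e (f (e.symm (e w))) = e (f w)
    rw [e.symm_apply_apply]
  rw [hset, hausdorffMeasure_pi_real] at himg
  -- back to Euclidean volume
  have : volume (⇑e.symm '' (⇑e '' (f '' s))) = 0 := mp_image_null e.symm hmp.symm himg
  rwa [show ⇑e.symm '' (⇑e '' (f '' s)) = f '' s by
    rw [← Set.image_comp]; simpa using Set.image_congr fun w _ => e.symm_apply_apply w] at this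

/-! ### The monotone graph closure and the projection map -/

variable {Ω : Set (Ed d)} {u : Ed d → Ed d}

def Mcl (Ω : Set (Ed d)) (u : Ed d → Ed d) : Set (Ed d × Ed d) :=
  closure {p : Ed d × Ed d | p.1 ∈ Ω ∧ p.2 = u p.1}

def CLs (Ω : Set (Ed d)) (u : Ed d → Ed d) (x : Ed d) : Set (Ed d) :=
  {w | (x, w) ∈ Mcl Ω u}

def hullCL (Ω : Set (Ed d)) (u : Ed d → Ed d) (x : Ed d) : Set (Ed d) :=
  convexHull ℝ (CLs Ω u x)

lemma mono_Mcl (hmono2 : ∀ a ∈ Ω, ∀ b ∈ Ω, 0 ≤ ⟪u a - u b, a - b⟫) :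
    ∀ p ∈ Mcl Ω u, ∀ q ∈ Mcl Ω u, 0 ≤ ⟪p.2 - q.2, p.1 - q.1⟫ := by
  intro p hp q hq
  set Gr := {p : Ed d × Ed d | p.1 ∈ Ω ∧ p.2 = u p.1} with hGr
  have hcont : Continuous fun pq : (Ed d × Ed d) × (Ed d × Ed d) =>
      ⟪pq.1.2 - pq.2.2, pq.1.1 - pq.2.1⟫ := by
    apply Continuous.inner
    · exact (continuous_fst.snd.sub continuous_snd.snd)
    · exact (continuous_fst.fst.sub continuous_snd.fst)
  have hclosed : IsClosed {pq : (Ed d × Ed d) × (Ed d × Ed d) |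
      0 ≤ ⟪pq.1.2 - pq.2.2, pq.1.1 - pq.2.1⟫} :=
    isClosed_le continuous_const hcont
  have hsub : Gr ×ˢ Gr ⊆ {pq : (Ed d × Ed d) × (Ed d × Ed d) |
      0 ≤ ⟪pq.1.2 - pq.2.2, pq.1.1 - pq.2.1⟫} := by
    rintro ⟨p', q'⟩ ⟨⟨hp1, hp2⟩, ⟨hq1, hq2⟩⟩
    simp only [Set.mem_setOf_eq]
    rw [hp2, hq2]
    exact hmono2 _ hp1 _ hq1
  have : Mcl Ω u ×ˢ Mcl Ω u ⊆ {pq : (Ed d × Ed d) × (Ed d × Ed d) |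
      0 ≤ ⟪pq.1.2 - pq.2.2, pq.1.1 - pq.2.1⟫} := by
    rw [Mcl, ← closure_prod_eq]
    exact closure_minimal hsub hclosed
  exact this (Set.mk_mem_prod hp hq)

lemma mem_CLs_self {x : Ed d} (hx : x ∈ Ω) : u x ∈ CLs Ω u x :=
  subset_closure ⟨hx, rfl⟩

lemma convex_inner_ge (v : Ed d) (c : ℝ) : Convex ℝ {w : Ed d | c ≤ ⟪w, v⟫} := by
  intro a ha b hb s t hs ht hst
  simp only [Set.mem_setOf_eq] at ha hb ⊢
  rw [inner_add_left, real_inner_smul_left, real_inner_smul_left]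
  have hc : s * c + t * c = c := by rw [← add_mul, hst, one_mul]
  nlinarith [mul_le_mul_of_nonneg_left ha hs, mul_le_mul_of_nonneg_left hb ht]

lemma convex_inner_le (v : Ed d) (c : ℝ) : Convex ℝ {w : Ed d | ⟪w, v⟫ ≤ c} := by
  intro a ha b hb s t hs ht hst
  simp only [Set.mem_setOf_eq] at ha hb ⊢
  rw [inner_add_left, real_inner_smul_left, real_inner_smul_left]
  have hc : s * c + t * c = c := by rw [← add_mul, hst, one_mul]
  nlinarith [mul_le_mul_of_nonneg_left ha hs, mul_le_mul_of_nonneg_left hb ht]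

lemma mono_hullCL (hmono2 : ∀ a ∈ Ω, ∀ b ∈ Ω, 0 ≤ ⟪u a - u b, a - b⟫)
    {x₁ x₂ w₁ w₂ : Ed d} (h₁ : w₁ ∈ hullCL Ω u x₁) (h₂ : w₂ ∈ hullCL Ω u x₂) :
    0 ≤ ⟪w₁ - w₂, x₁ - x₂⟫ := by
  set v := x₁ - x₂ with hv
  have stepA : ∀ w₁' ∈ CLs Ω u x₁, ∀ w₂' ∈ hullCL Ω u x₂, 0 ≤ ⟪w₁' - w₂', v⟫ := by
    intro w₁' hw₁' w₂' hw₂'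
    have hQ : hullCL Ω u x₂ ⊆ {w : Ed d | ⟪w, v⟫ ≤ ⟪w₁', v⟫} := by
      refine convexHull_min ?_ (convex_inner_le v _)
      intro w hw
      have := mono_Mcl hmono2 (x₁, w₁') hw₁' (x₂, w) hw
      simp only [Set.mem_setOf_eq]
      rw [inner_sub_left] at this
      linarith
    have := hQ hw₂'
    simp only [Set.mem_setOf_eq] at this
    rw [inner_sub_left]
    linarith
  have hQ' : hullCL Ω u x₁ ⊆ {w : Ed d | ⟪w₂, v⟫ ≤ ⟪w, v⟫} := by
    refine convexHull_min ?_ ?_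
    · intro w hw
      have := stepA w hw w₂ h₂
      simp only [Set.mem_setOf_eq]
      rw [inner_sub_left] at this
      linarith
    · exact convex_inner_ge v _
  have := hQ' h₁
  simp only [Set.mem_setOf_eq] at this
  rw [inner_sub_left]
  linarith

open scoped Classical in
def Pmap (Ω : Set (Ed d)) (u : Ed d → Ed d) : Ed d → Ed d := fun zz =>
  if h : ∃ x w, x ∈ Ω ∧ w ∈ hullCL Ω u x ∧ zz = x + w then h.choose else 0

def Aset (Ω : Set (Ed d)) (u : Ed d → Ed d) : Set (Ed d) :=
  {zz | ∃ x w, x ∈ Ω ∧ w ∈ hullCL Ω u x ∧ zz = x + w}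

lemma Pmap_spec {zz : Ed d} (hz : zz ∈ Aset Ω u) :
    Pmap Ω u zz ∈ Ω ∧ ∃ w, w ∈ hullCL Ω u (Pmap Ω u zz) ∧ zz = Pmap Ω u zz + w := by
  classical
  have hz' : ∃ x w, x ∈ Ω ∧ w ∈ hullCL Ω u x ∧ zz = x + w := hz
  have hPeq : Pmap Ω u zz = hz'.choose := by rw [Pmap, dif_pos hz']
  obtain ⟨w, hw1, hw2, hw3⟩ := hz'.choose_spec
  rw [hPeq]
  exact ⟨hw1, w, hw2, hw3⟩

lemma Pmap_eq (hmono2 : ∀ a ∈ Ω, ∀ b ∈ Ω, 0 ≤ ⟪u a - u b, a - b⟫)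
    {x w : Ed d} (hx : x ∈ Ω) (hw : w ∈ hullCL Ω u x) : Pmap Ω u (x + w) = x := by
  have hz : x + w ∈ Aset Ω u := ⟨x, w, hx, hw, rfl⟩
  obtain ⟨hx', w', hw', heq⟩ := Pmap_spec hz
  set x' := Pmap Ω u (x + w)
  have hxx : x - x' = w' - w := by
    rw [sub_eq_sub_iff_add_eq_add, heq]
    exact add_comm _ _
  have h0 : 0 ≤ ⟪w - w', x - x'⟫ := mono_hullCL hmono2 hw hw'
  have h1 : ⟪x - x', x - x'⟫ ≤ 0 := by
    rw [hxx] at h0 ⊢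
    have : ⟪w' - w, w' - w⟫ = -⟪w - w', w' - w⟫ := by
      rw [show w - w' = -(w' - w) by abel, inner_neg_left, neg_neg]
    rw [this]
    linarith
  have h2 : x - x' = 0 := by
    have := real_inner_self_nonneg (x := x - x')
    have hz2 : ⟪x - x', x - x'⟫ = 0 := le_antisymm h1 this
    exact inner_self_eq_zero.mp hz2
  have : x = x' := by
    have := sub_eq_zero.mp h2; exact this
  exact this.symm

lemma Pmap_lipschitzOn (hmono2 : ∀ a ∈ Ω, ∀ b ∈ Ω, 0 ≤ ⟪u a - u b, a - b⟫) :
    LipschitzOnWith 1 (Pmap Ω u) (Aset Ω u) := by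
  rw [lipschitzOnWith_iff_dist_le_mul]
  intro z₁ h₁ z₂ h₂
  obtain ⟨hx₁, w₁, hw₁, heq₁⟩ := Pmap_spec h₁
  obtain ⟨hx₂, w₂, hw₂, heq₂⟩ := Pmap_spec h₂
  set x₁ := Pmap Ω u z₁
  set x₂ := Pmap Ω u z₂
  rw [NNReal.coe_one, one_mul, dist_eq_norm, dist_eq_norm]
  have key : ‖x₁ - x₂‖ ^ 2 ≤ ‖z₁ - z₂‖ * ‖x₁ - x₂‖ := by
    have hsplit : z₁ - z₂ = (x₁ - x₂) + (w₁ - w₂) := by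
      rw [heq₁, heq₂]; abel
    have h0 : 0 ≤ ⟪w₁ - w₂, x₁ - x₂⟫ := mono_hullCL hmono2 hw₁ hw₂
    have h1 : ⟪z₁ - z₂, x₁ - x₂⟫ = ‖x₁ - x₂‖ ^ 2 + ⟪w₁ - w₂, x₁ - x₂⟫ := by
      rw [hsplit, inner_add_left, real_inner_self_eq_norm_sq]
    have h2 : ⟪z₁ - z₂, x₁ - x₂⟫ ≤ ‖z₁ - z₂‖ * ‖x₁ - x₂‖ := real_inner_le_norm _ _
    linarith
  by_cases hz : ‖x₁ - x₂‖ = 0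
  · rw [hz]; positivity
  · have hpos : 0 < ‖x₁ - x₂‖ := lt_of_le_of_ne (norm_nonneg _) (Ne.symm hz)
    nlinarith

lemma exists_lip_ext (hmono2 : ∀ a ∈ Ω, ∀ b ∈ Ω, 0 ≤ ⟪u a - u b, a - b⟫) :
    ∃ (K : ℝ≥0) (Pt : Ed d → Ed d), LipschitzWith K Pt ∧
      Set.EqOn Pt (Pmap Ω u) (Aset Ω u) := by
  have lip_e : LipschitzWith 1 (⇑(WithLp.equiv 2 (Fin d → ℝ))) :=
    PiLp.lipschitzWith_ofLp 2 (fun _ : Fin d => ℝ)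
  obtain ⟨K₂, lip_esymm⟩ : ∃ K₂ : ℝ≥0, LipschitzWith K₂ (⇑(WithLp.equiv 2 (Fin d → ℝ)).symm) :=
    ⟨_, (PiLp.antilipschitzWith_ofLp 2 (fun _ : Fin d => ℝ)).to_rightInverse
      (fun v => (WithLp.equiv 2 (Fin d → ℝ)).apply_symm_apply v)⟩
  have h1 : LipschitzOnWith (1 * 1) (fun zz => (WithLp.equiv 2 (Fin d → ℝ)) (Pmap Ω u zz))
      (Aset Ω u) := lip_e.comp_lipschitzOnWith (Pmap_lipschitzOn hmono2)
  obtain ⟨g, hg, hgeq⟩ := h1.extend_pi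
  refine ⟨K₂ * (1 * 1), fun zz => (WithLp.equiv 2 (Fin d → ℝ)).symm (g zz),
    lip_esymm.comp hg, ?_⟩
  intro zz hzz
  have h2 := hgeq hzz
  simp only at h2
  show (WithLp.equiv 2 (Fin d → ℝ)).symm (g zz) = Pmap Ω u zz
  rw [← h2]
  exact (WithLp.equiv 2 (Fin d → ℝ)).symm_apply_apply _

/-- Discontinuity points (within `Ω`) of a bounded monotone map form a null set. -/
lemma disc_null {C : ℝ} (hΩopen : IsOpen Ω)
    (hC : ∀ w ∈ Ω, ‖u w‖ ≤ C)
    (hmono2 : ∀ a ∈ Ω, ∀ b ∈ Ω, 0 ≤ ⟪u a - u b, a - b⟫) :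
    volume {x | x ∈ Ω ∧ ¬ ContinuousWithinAt u Ω x} = 0 := by
  obtain ⟨K, Pt, hPt, heq⟩ := exists_lip_ext hmono2
  -- the non-differentiability set of Pt is null (Rademacher)
  set ND := {zz : Ed d | ¬ DifferentiableAt ℝ Pt zz} with hND
  have hNDnull : volume ND = 0 := by
    have h := hPt.ae_differentiableAt (μ := volume)
    rwa [ae_iff] at h
  -- the degenerate-differential set
  set K₀ := {zz : Ed d | DifferentiableAt ℝ Pt zz ∧ (fderiv ℝ Pt zz).det = 0} with hK₀
  have hK₀null : volume (Pt '' K₀) = 0 := by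
    refine addHaar_image_eq_zero_of_det_fderivWithin_eq_zero volume
      (f' := fun zz => fderiv ℝ Pt zz) (fun zz hz => ?_) (fun zz hz => hz.2)
    exact hz.1.hasFDerivAt.hasFDerivWithinAt
  have hNDim : volume (Pt '' ND) = 0 := lipschitz_image_null hPt hNDnull
  refine measure_mono_null ?_ (measure_union_null hK₀null hNDim)
  -- each discontinuity point is in one of the two images
  rintro x ⟨hxΩ, hxd⟩
  -- extract a nontrivial cluster value w of u at x
  obtain ⟨w, hwM, hwne⟩ : ∃ w, w ∈ CLs Ω u x ∧ w ≠ u x := by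
    rw [ContinuousWithinAt, Metric.tendsto_nhdsWithin_nhds] at hxd
    push_neg at hxd
    obtain ⟨ε, hε, hseq⟩ := hxd
    have hy : ∀ k : ℕ, ∃ y, y ∈ Ω ∧ dist y x < 1 / (k + 1) ∧ ε ≤ dist (u y) (u x) := by
      intro k
      obtain ⟨y, hy1, hy2, hy3⟩ := hseq (1 / (k + 1)) (by positivity)
      exact ⟨y, hy1, hy2, hy3⟩
    choose y hy1 hy2 hy3 using hy
    have hbdd : ∀ k, u (y k) ∈ Metric.closedBall (0 : Ed d) (max C 0) := by
      intro k
      rw [Metric.mem_closedBall, dist_zero_right]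
      exact le_trans (hC _ (hy1 k)) (le_max_left _ _)
    obtain ⟨w, hwball, φ, hφ, hφtend⟩ :=
      (isCompact_closedBall (0 : Ed d) (max C 0)).tendsto_subseq hbdd
    have hytend : Filter.Tendsto (fun k => y (φ k)) Filter.atTop (nhds x) := by
      rw [Metric.tendsto_atTop]
      intro δ hδ
      obtain ⟨n0, hn0⟩ := exists_nat_one_div_lt (K := ℝ) hδ
      refine ⟨n0, fun k hk => ?_⟩
      refine lt_of_lt_of_le (hy2 (φ k)) ?_
      calc (1 : ℝ) / (φ k + 1) ≤ 1 / (n0 + 1) := by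
            have hka : k ≤ φ k := hφ.le_apply
            have h0 : (n0 : ℝ) ≤ (φ k : ℝ) := by exact_mod_cast le_trans hk hka
            have h1 : (n0 : ℝ) + 1 ≤ (φ k : ℝ) + 1 := by linarith
            apply div_le_div_of_nonneg_left _ _ h1 <;> positivity
        _ ≤ δ := hn0.le
    refine ⟨w, ?_, ?_⟩
    · -- (x, w) is in the closure of the graph
      have htend : Filter.Tendsto (fun k => ((y (φ k) : Ed d), u (y (φ k))))
          Filter.atTop (nhds (x, w)) := hytend.prodMk_nhds hφtend
      refine mem_closure_of_tendsto htend ?_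
      filter_upwards with k
      exact ⟨hy1 (φ k), rfl⟩
    · -- w stays at distance ≥ ε from u x
      intro hcontra
      have hdist : Filter.Tendsto (fun k => dist (u (y (φ k))) (u x)) Filter.atTop
          (nhds (dist w (u x))) := hφtend.dist tendsto_const_nhds
      have hge : ε ≤ dist w (u x) :=
        le_of_tendsto_of_tendsto tendsto_const_nhds hdist
          (Filter.Eventually.of_forall fun k => hy3 (φ k))
      rw [hcontra, dist_self] at hge
      linarith
  -- the segment from u x to w sits inside the fiber of Pt over x
  set e := w - u x with hedef
  have hene : e ≠ 0 := sub_ne_zero.mpr hwne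
  have hmemhull : ∀ s : ℝ, 0 ≤ s → s ≤ 1 → u x + s • e ∈ hullCL Ω u x := by
    intro s hs hs1
    have hrepr : u x + s • e = (1 - s) • u x + s • w := by
      rw [hedef, smul_sub]
      module
    rw [hrepr]
    exact (convex_convexHull ℝ (CLs Ω u x))
      (subset_convexHull ℝ _ (mem_CLs_self hxΩ))
      (subset_convexHull ℝ _ hwM) (by linarith) hs (by ring)
  set z₀ := x + (u x + (2⁻¹ : ℝ) • e) with hz₀def
  have hseg : ∀ t : ℝ, |t| ≤ 2⁻¹ → Pt (z₀ + t • e) = x := by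
    intro t ht
    have habs := abs_le.mp ht
    have hmem : u x + (2⁻¹ + t) • e ∈ hullCL Ω u x :=
      hmemhull _ (by linarith) (by linarith)
    have hrw : z₀ + t • e = x + (u x + (2⁻¹ + t) • e) := by
      rw [hz₀def, add_smul]
      abel
    rw [hrw, heq ⟨x, _, hxΩ, hmem, rfl⟩]
    exact Pmap_eq hmono2 hxΩ hmem
  have hPtz₀ : Pt z₀ = x := by
    have := hseg 0 (by norm_num)
    simpa using this
  by_cases hdiff : DifferentiableAt ℝ Pt z₀
  · -- differentiable: the derivative kills e, so the determinant vanishes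
    left
    refine ⟨z₀, ⟨hdiff, ?_⟩, hPtz₀⟩
    -- directional derivative along e is zero
    have hline : HasDerivAt (fun t : ℝ => Pt (z₀ + t • e)) (fderiv ℝ Pt z₀ e) 0 := by
      have hinner : HasDerivAt (fun t : ℝ => z₀ + t • e) e 0 := by
        have h1 : HasDerivAt (fun t : ℝ => t • e) ((1 : ℝ) • e) 0 :=
          (hasDerivAt_id (0 : ℝ)).smul_const e
      
        simpa using h1.const_add z₀
      have hcomp := HasFDerivAt.comp_hasDerivAt (x := (0:ℝ))
        (by simpa using hdiff.hasFDerivAt) hinner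
      exact hcomp
    have hline0 : HasDerivAt (fun t : ℝ => Pt (z₀ + t • e)) 0 0 := by
      have hev : (fun t : ℝ => Pt (z₀ + t • e)) =ᶠ[nhds (0:ℝ)] fun _ => x := by
        have : ∀ᶠ t in nhds (0:ℝ), |t| ≤ 2⁻¹ := by
          have := Metric.ball_mem_nhds (0 : ℝ) (by norm_num : (0:ℝ) < 2⁻¹)
          filter_upwards [this] with t ht
          rw [Metric.mem_ball, Real.dist_eq, sub_zero] at ht
          exact ht.le
        filter_upwards [this] with t ht
        exact hseg t ht
      exact (hasDerivAt_const (0:ℝ) x).congr_of_eventuallyEq hev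
    have hkill : fderiv ℝ Pt z₀ e = 0 := hline.unique hline0
    -- nontrivial kernel implies det = 0
    by_contra hdet
    have hinj := (LinearMap.equivOfDetNeZero ((fderiv ℝ Pt z₀) : Ed d →ₗ[ℝ] Ed d)
      hdet).injective
    have : ((fderiv ℝ Pt z₀) : Ed d →ₗ[ℝ] Ed d) e
        = ((fderiv ℝ Pt z₀) : Ed d →ₗ[ℝ] Ed d) 0 := by
      simp only [map_zero]
      exact hkill
    exact hene (hinj (by exact_mod_cast this))
  · right
    exact ⟨z₀, hdiff, hPtz₀⟩


end S6

theorem statement6 {d : ℕ} (N : ℕ) (hN : 2 ≤ N)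
    (Ω : Set (Ed d)) (hΩopen : IsOpen Ω) (hΩconv : Convex ℝ Ω)
    (hΩbdd : Bornology.IsBounded Ω) (hΩne : Ω.Nonempty)
    (u : Ed d → Ed d)
    (hubdd : ∃ C : ℝ, ∀ x ∈ Ω, ‖u x‖ ≤ C)
    (hmono : NCyclicallyMonotone N Ω u) :
    ∃ F : Ed d → Ed d → ℝ,
      -- (i) `F` is concave in the first variable and convex in the second
      (∀ y ∈ Ω, ConcaveOn ℝ Ω (fun x => F x y)) ∧
      (∀ x ∈ Ω, ConvexOn ℝ Ω (fun y => F x y)) ∧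
      -- (ii) `F` is `N`-cyclically sub-antisymmetric: zero on the diagonal and
      -- `∑_{i=1}^N F(xᵢ, xᵢ₊₁) ≤ 0` for every cyclic family in `Ω`
      (∀ x ∈ Ω, F x x = 0) ∧
      (∀ x : ℕ → Ed d, (∀ i, 1 ≤ i → i ≤ N → x i ∈ Ω) → x (N + 1) = x 1 →
        ∑ i ∈ Icc 1 N, F (x i) (x (i + 1)) ≤ 0) ∧
      -- (iii) `⟨u(x₁), x₂ - x₁⟩ ≤ F(x₁,x₂) ≤ ⟨u(x₂), x₂ - x₁⟩` on `Ω × Ω`,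
      -- i.e. `(-u(x), u(x))` is in the subdifferential of `F` at `(x,x)`
      (∀ x₁ ∈ Ω, ∀ x₂ ∈ Ω,
        ⟪u x₁, x₂ - x₁⟫ ≤ F x₁ x₂ ∧ F x₁ x₂ ≤ ⟪u x₂, x₂ - x₁⟫) ∧
      -- (iv) for a.e. `x ∈ Ω`, `y ↦ F(x,y)` is differentiable at `y = x` with
      -- gradient `u(x)`
      (∀ᵐ x ∂(volume.restrict Ω), HasGradientAt (fun y => F x y) (u x) x) := by
  classical
  obtain ⟨C₀, hC₀⟩ := hubdd
  set C := max C₀ 0 with hCdef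
  have hC : ∀ w ∈ Ω, ‖u w‖ ≤ C := fun w hw => le_trans (hC₀ w hw) (le_max_left _ _)
  have hC0 : (0:ℝ) ≤ C := le_max_right _ _
  obtain ⟨R, hR⟩ := isBounded_iff_forall_norm_le.mp hΩbdd
  have hmono' : S6.NCyclicallyMonotone' N Ω u := hmono
  have hmono2 := S6.mono2 hN hmono'
  refine ⟨S6.FF Ω u, ?_, ?_, ?_, ?_, ?_, ?_⟩
  · intro y _
    exact S6.FF_concaveOn hC hR hC0 hΩconv y
  · intro x hx
    exact S6.FF_convexOn hC hR hC0 hΩconv hx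
  · intro x hx
    exact S6.FF_diag hC hR hC0 hmono2 hx
  · intro x hx hcyc
    exact S6.FF_cyclic hC hR hC0 hN hmono' x hx hcyc
  · intro x₁ hx₁ x₂ hx₂
    exact ⟨S6.FF_lower hC hR hC0 hx₁, S6.FF_upper hC hR hC0 hmono2 hx₁ hx₂⟩
  · have hdisc := S6.disc_null hΩopen hC hmono2
    have h1 : ∀ᵐ x ∂(volume.restrict Ω), x ∈ Ω := ae_restrict_mem hΩopen.measurableSet
    have h2 : ∀ᵐ x ∂(volume.restrict Ω), ¬(x ∈ Ω ∧ ¬ ContinuousWithinAt u Ω x) := by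
      have h2' : ∀ᵐ x ∂(volume : Measure (Ed d)), ¬(x ∈ Ω ∧ ¬ ContinuousWithinAt u Ω x) := by
        rw [ae_iff]
        simpa using hdisc
      exact ae_mono Measure.restrict_le_self h2'
    filter_upwards [h1, h2] with x hx1 hx2
    have hcont : ContinuousWithinAt u Ω x := by tauto
    rw [hasGradientAt_iff_isLittleO]
    have hFdiag : S6.FF Ω u x x = 0 := S6.FF_diag hC hR hC0 hmono2 hx1
    rw [Asymptotics.isLittleO_iff]
    intro c hc
    have hΩnhds : Ω ∈ nhds x := hΩopen.mem_nhds hx1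
    have htd : Filter.Tendsto u (nhds x) (nhds (u x)) := by
      have hnw : nhdsWithin x Ω = nhds x := nhdsWithin_eq_nhds.mpr hΩnhds
      rw [ContinuousWithinAt, hnw] at hcont
      exact hcont
    have hev2 := Metric.tendsto_nhds.mp htd c hc
    filter_upwards [Filter.eventually_of_mem hΩnhds fun y hy => hy, hev2] with y hyΩ hyc
    have hlow := S6.FF_lower hC hR hC0 (y := y) hx1
    have hup := S6.FF_upper hC hR hC0 hmono2 hx1 hyΩ
    have hinner : ⟪u y, y - x⟫ - ⟪u x, y - x⟫ = ⟪u y - u x, y - x⟫ :=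
      (inner_sub_left _ _ _).symm
    have hcs : ⟪u y - u x, y - x⟫ ≤ ‖u y - u x‖ * ‖y - x‖ := real_inner_le_norm _ _
    have hnorm : ‖u y - u x‖ ≤ c := by
      rw [dist_eq_norm] at hyc
      exact hyc.le
    have hmul : ‖u y - u x‖ * ‖y - x‖ ≤ c * ‖y - x‖ :=
      mul_le_mul_of_nonneg_right hnorm (norm_nonneg _)
    rw [hFdiag, sub_zero, Real.norm_eq_abs]
    rw [abs_le]
    constructor
    · have := mul_nonneg hc.le (norm_nonneg (y - x))
      linarith
    · linarith
end
end

section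
/- Let N ≥ 2, let Ω be a convex bounded domain in ℝ^d whose boundary has Lebesgue measure zero, let μ be normalized Lebesgue measure on Ω, and let u_1,…,u_{N−1} : Ω → ℝ^d be bounded measurable vector fields. If the (N−1)-tuple (u_1,…,u_{N−1}) is jointly N-monotone on Ω ∖ Ω_0 for some set Ω_0 of measure zero, then for every σ-invariant probability measure π on Ω^N with first marginal μ, ∫_{Ω^N} ∑_{ℓ=1}^{N−1} ⟨u_ℓ(x_1), x_1 − x_{ℓ+1}⟩ dπ(x_1,…,x_N) ≥ 0; moreover this integral equals 0 when π is the pushforward of μ by the diagonal map x ↦ (x,x,…,x), so the infimum over all such π is zero and is attained by the diagonal measure. -/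
open MeasureTheory Finset
open scoped BigOperators RealInnerProductSpace

noncomputable section

open Fin.NatCast

lemma cyc_iter_apply {α : Type*} {N : ℕ} [NeZero N] (k : ℕ) (x : Fin N → α) (j : Fin N) :
    (cyc^[k] x) j = x (j + (k : Fin N)) := by
  induction k generalizing x with
  | zero => simp
  | succ k ih =>
    rw [Function.iterate_succ_apply, ih]
    show x (finRotate N (j + (k : Fin N))) = _
    obtain ⟨m, rfl⟩ : ∃ m, N = m + 1 := ⟨N - 1, (Nat.succ_pred_eq_of_pos (NeZero.pos N)).symm⟩
    rw [finRotate_succ_apply]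
    congr 1
    push_cast
    abel

lemma measurable_cyc' {N : ℕ} {α : Type*} [MeasurableSpace α] :
    Measurable (cyc : (Fin N → α) → (Fin N → α)) :=
  measurable_pi_lambda _ fun _ => measurable_pi_apply _

theorem statement10 {d : ℕ} (N : ℕ) [NeZero N] (hN : 2 ≤ N)
    (Ω : Set (Ed d)) (hΩopen : IsOpen Ω) (hΩconv : Convex ℝ Ω)
    (hΩbdd : Bornology.IsBounded Ω) (hΩne : Ω.Nonempty)
    -- the boundary of `Ω` has Lebesgue measure zero
    (hΩfr : volume (frontier Ω) = 0)
    -- `μ` is normalized Lebesgue measure on `Ω`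
    (μ : Measure (Ed d)) (hμ : μ = (volume Ω)⁻¹ • volume.restrict Ω)
    (u : ℕ → Ed d → Ed d)
    (humeas : ∀ ℓ ∈ Icc 1 (N - 1), Measurable (u ℓ))
    (hubdd : ∀ ℓ ∈ Icc 1 (N - 1), ∃ C : ℝ, ∀ x ∈ Ω, ‖u ℓ x‖ ≤ C)
    -- `(u 1, …, u (N-1))` is jointly `N`-monotone off a set `Ω₀` of measure zero
    (Ω₀ : Set (Ed d)) (hΩ₀ : volume Ω₀ = 0)
    (hmono : JointlyNMonotone N (Ω \ Ω₀) u) :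
    -- for every `σ`-invariant probability measure `π` on `Ω^N` with first marginal `μ`,
    -- the Monge–Kantorovich cost is nonnegative
    (∀ π : Measure (Fin N → Ed d), IsProbabilityMeasure π →
      π {y : Fin N → Ed d | ∀ i, y i ∈ Ω}ᶜ = 0 →
      Measure.map cyc π = π →
      Measure.map (fun y : Fin N → Ed d => y 0) π = μ →
      0 ≤ ∫ y, ∑ ℓ ∈ Icc 1 (N - 1), ⟪u ℓ (y 0), y 0 - y (ℓ : Fin N)⟫ ∂π) ∧
    -- the cost vanishes for the pushforward of `μ` by the diagonal map
    (∫ y, ∑ ℓ ∈ Icc 1 (N - 1), ⟪u ℓ (y 0), y 0 - y (ℓ : Fin N)⟫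
        ∂(Measure.map (fun x : Ed d => fun _ : Fin N => x) μ) = 0) ∧
    -- hence the infimum over all such `π` is zero and is attained
    IsLeast {r : ℝ | ∃ π : Measure (Fin N → Ed d), IsProbabilityMeasure π ∧
      π {y : Fin N → Ed d | ∀ i, y i ∈ Ω}ᶜ = 0 ∧
      Measure.map cyc π = π ∧
      Measure.map (fun y : Fin N → Ed d => y 0) π = μ ∧
      r = ∫ y, ∑ ℓ ∈ Icc 1 (N - 1), ⟪u ℓ (y 0), y 0 - y (ℓ : Fin N)⟫ ∂π} 0 := by
  classical
  set G : (Fin N → Ed d) → ℝ :=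
    fun y => ∑ ℓ ∈ Icc 1 (N - 1), ⟪u ℓ (y 0), y 0 - y (ℓ : Fin N)⟫ with hG
  -- measurability of G
  have hGmeas : Measurable G := by
    apply Finset.measurable_sum
    intro ℓ hℓ
    exact ((humeas ℓ hℓ).comp (measurable_pi_apply 0)).inner
      ((measurable_pi_apply 0).sub (measurable_pi_apply _))
  -- bound for G on Ω^N
  obtain ⟨R, hR⟩ := hΩbdd.exists_norm_le
  have hubdd' : ∀ ℓ : ℕ, ∃ C : ℝ, ℓ ∈ Icc 1 (N - 1) → ∀ x ∈ Ω, ‖u ℓ x‖ ≤ C := by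
    intro ℓ
    by_cases h : ℓ ∈ Icc 1 (N - 1)
    · exact (hubdd ℓ h).imp fun C hC _ => hC
    · exact ⟨0, fun h' => absurd h' h⟩
  choose C hC using hubdd'
  set B : ℝ := ∑ ℓ ∈ Icc 1 (N - 1), C ℓ * (R + R) with hB
  have hGbdd : ∀ y : Fin N → Ed d, (∀ i, y i ∈ Ω) → ‖G y‖ ≤ B := by
    intro y hy
    calc ‖G y‖ ≤ ∑ ℓ ∈ Icc 1 (N - 1), ‖⟪u ℓ (y 0), y 0 - y (ℓ : Fin N)⟫‖ :=
          norm_sum_le _ _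
      _ ≤ B := by
          apply Finset.sum_le_sum
          intro ℓ hℓ
          calc ‖⟪u ℓ (y 0), y 0 - y (ℓ : Fin N)⟫‖
              ≤ ‖u ℓ (y 0)‖ * ‖y 0 - y (ℓ : Fin N)‖ := norm_inner_le_norm _ _
            _ ≤ C ℓ * (R + R) := by
                apply mul_le_mul (hC ℓ hℓ _ (hy 0)) _ (norm_nonneg _)
                  ((norm_nonneg (u ℓ (y 0))).trans (hC ℓ hℓ _ (hy 0)))
                exact (norm_sub_le _ _).trans (add_le_add (hR _ (hy 0)) (hR _ (hy _)))
  -- pointwise cyclic inequality off the null set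
  have hkey_pt : ∀ y : Fin N → Ed d, (∀ i, y i ∈ Ω \ Ω₀) →
      0 ≤ ∑ i ∈ range N, G (cyc^[i] y) := by
    intro y hy
    have h := hmono (fun i => y ((i - 1 : ℕ) : Fin N)) (fun i _ _ => hy _)
      (fun i hi1 _ => by
        show y ((N + i - 1 : ℕ) : Fin N) = y ((i - 1 : ℕ) : Fin N)
        congr 1
        have hNi : N + i - 1 = (i - 1) + N := by omega
        rw [hNi]
        push_cast
        simp)
    refine le_trans h (le_of_eq ?_)
    rw [← Finset.Ico_add_one_right_eq_Icc, Finset.sum_Ico_eq_sum_range]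
    have hN1 : N + 1 - 1 = N := by omega
    rw [hN1]
    refine Finset.sum_congr rfl fun i _ => Finset.sum_congr rfl fun ℓ _ => ?_
    have h1 : (1 + i - 1 : ℕ) = i := by omega
    have h2 : (1 + i + ℓ - 1 : ℕ) = i + ℓ := by omega
    simp only [h1, h2, hG, cyc_iter_apply, zero_add, Nat.cast_add]
    rw [add_comm (i : Fin N) (ℓ : Fin N)]
  -- basic facts about μ
  have hvolΩ0 : volume Ω ≠ 0 := (hΩopen.measure_pos volume hΩne).ne'
  have hvolΩtop : volume Ω ≠ ⊤ := hΩbdd.measure_lt_top.ne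
  have hμprob : IsProbabilityMeasure μ := by
    constructor
    rw [hμ]
    simp [ENNReal.inv_mul_cancel hvolΩ0 hvolΩtop]
  have hμΩc : μ Ωᶜ = 0 := by
    rw [hμ]
    simp [Measure.restrict_apply hΩopen.measurableSet.compl]
  have hμnull : ∀ s : Set (Ed d), volume s = 0 → μ s = 0 := by
    intro s hs
    rw [hμ]
    simp only [Measure.smul_apply, smul_eq_mul]
    have h1 : volume.restrict Ω s ≤ volume s := Measure.restrict_apply_le _ _
    rw [hs] at h1
    simp [le_antisymm h1 zero_le]
  have hcycm : Measurable (cyc : (Fin N → Ed d) → _) := measurable_cyc'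
  -- part 1
  have key : ∀ π : Measure (Fin N → Ed d), IsProbabilityMeasure π →
      π {y : Fin N → Ed d | ∀ i, y i ∈ Ω}ᶜ = 0 →
      Measure.map cyc π = π →
      Measure.map (fun y : Fin N → Ed d => y 0) π = μ →
      0 ≤ ∫ y, G y ∂π := by
    intro π hπprob hπΩ hπcyc hπmarg
    have hiter : ∀ k : ℕ, Measure.map (cyc^[k]) π = π := by
      intro k
      induction k with
      | zero => simp
      | succ k ih =>
        rw [Function.iterate_succ', ← Measure.map_map hcycm (hcycm.iterate k), ih, hπcyc]
    have hmargN : ∀ k : ℕ, Measure.map (fun y : Fin N → Ed d => y (k : Fin N)) π = μ := by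
      intro k
      have he : (fun y : Fin N → Ed d => y (k : Fin N)) = (fun y => y 0) ∘ cyc^[k] := by
        funext y
        simp [Function.comp, cyc_iter_apply]
      rw [he, ← Measure.map_map (measurable_pi_apply 0) (hcycm.iterate k), hiter, hπmarg]
    have hmarg : ∀ i : Fin N, Measure.map (fun y : Fin N → Ed d => y i) π = μ := by
      intro i
      have := hmargN i.val
      rwa [Fin.cast_val_eq_self] at this
    have haeΩ : ∀ᵐ y ∂π, ∀ i, y i ∈ Ω := by
      rw [ae_iff]
      exact hπΩ
    have haeΩ₀ : ∀ i : Fin N, ∀ᵐ y ∂π, y i ∉ Ω₀ := by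
      intro i
      rw [ae_iff]
      simp only [not_not]
      have hT : μ (toMeasurable volume Ω₀) = 0 :=
        hμnull _ (by rw [measure_toMeasurable, hΩ₀])
      refine measure_mono_null (fun y hy => subset_toMeasurable volume Ω₀ hy) ?_
      show π ((fun y : Fin N → Ed d => y i) ⁻¹' toMeasurable volume Ω₀) = 0
      rw [← Measure.map_apply (measurable_pi_apply i) (measurableSet_toMeasurable _ _),
        hmarg i, hT]
    have hae : ∀ᵐ y ∂π, ∀ i : Fin N, y i ∈ Ω \ Ω₀ := by
      have h2 : ∀ᵐ y ∂π, ∀ i : Fin N, y i ∉ Ω₀ := ae_all_iff.2 haeΩ₀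
      filter_upwards [haeΩ, h2] with y h1 h2 i
      exact ⟨h1 i, h2 i⟩
    have hGint : Integrable G π :=
      ⟨hGmeas.aestronglyMeasurable, HasFiniteIntegral.of_bounded
        (by filter_upwards [haeΩ] with y hy; exact hGbdd y hy)⟩
    have hGint_iter : ∀ k : ℕ, Integrable (fun y => G (cyc^[k] y)) π := by
      intro k
      have h := integrable_map_measure (μ := π) (f := cyc^[k]) (g := G)
        hGmeas.aestronglyMeasurable (hcycm.iterate k).aemeasurable
      rw [hiter k] at h
      exact h.1 hGint
    have hint_eq : ∀ k : ℕ, ∫ y, G (cyc^[k] y) ∂π = ∫ y, G y ∂π := by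
      intro k
      have h : ∫ y, G y ∂π = ∫ y, G y ∂(Measure.map (cyc^[k]) π) := by rw [hiter]
      rw [h, integral_map (hcycm.iterate k).aemeasurable hGmeas.aestronglyMeasurable]
    have hsum_nonneg : 0 ≤ ∫ y, ∑ i ∈ range N, G (cyc^[i] y) ∂π := by
      refine integral_nonneg_of_ae ?_
      filter_upwards [hae] with y hy
      exact hkey_pt y hy
    have hsum_eq : ∫ y, ∑ i ∈ range N, G (cyc^[i] y) ∂π = (N : ℝ) * ∫ y, G y ∂π := by
      rw [integral_finset_sum _ (fun i _ => hGint_iter i)]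
      simp only [hint_eq]
      rw [Finset.sum_const, Finset.card_range, nsmul_eq_mul]
    rw [hsum_eq] at hsum_nonneg
    have hNpos : (0 : ℝ) < N := by
      have : 0 < N := by omega
      exact_mod_cast this
    nlinarith
  -- the diagonal map
  set diag : Ed d → (Fin N → Ed d) := fun x _ => x with hdiag
  have hdiagm : Measurable diag := measurable_pi_lambda _ fun _ => measurable_id
  have hdiagzero : ∫ y, G y ∂(Measure.map diag μ) = 0 := by
    rw [integral_map hdiagm.aemeasurable hGmeas.aestronglyMeasurable]
    simp [hG, hdiag]
  have hπ₀prob : IsProbabilityMeasure (Measure.map diag μ) :=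
    Measure.isProbabilityMeasure_map hdiagm.aemeasurable
  have hsetm : MeasurableSet {y : Fin N → Ed d | ∀ i, y i ∈ Ω} := by
    have he : {y : Fin N → Ed d | ∀ i, y i ∈ Ω} = ⋂ i, (fun y : Fin N → Ed d => y i) ⁻¹' Ω := by
      ext y; simp
    rw [he]
    exact MeasurableSet.iInter fun i => (measurable_pi_apply i) hΩopen.measurableSet
  have hπ₀Ω : (Measure.map diag μ) {y : Fin N → Ed d | ∀ i, y i ∈ Ω}ᶜ = 0 := by
    rw [Measure.map_apply hdiagm hsetm.compl]
    have he : diag ⁻¹' {y : Fin N → Ed d | ∀ i, y i ∈ Ω}ᶜ = Ωᶜ := by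
      ext x; simp [hdiag]
    rw [he, hμΩc]
  have hπ₀cyc : Measure.map cyc (Measure.map diag μ) = Measure.map diag μ := by
    rw [Measure.map_map hcycm hdiagm]
    have he : cyc ∘ diag = diag := by
      funext x j
      rfl
    rw [he]
  have hπ₀marg : Measure.map (fun y : Fin N → Ed d => y 0) (Measure.map diag μ) = μ := by
    rw [Measure.map_map (measurable_pi_apply 0) hdiagm]
    have he : (fun y : Fin N → Ed d => y 0) ∘ diag = id := by
      funext x
      rfl
    rw [he, Measure.map_id]
  refine ⟨key, hdiagzero, ⟨⟨Measure.map diag μ, hπ₀prob, hπ₀Ω, hπ₀cyc, hπ₀marg,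
    hdiagzero.symm⟩, ?_⟩⟩
  rintro r ⟨π, h1, h2, h3, h4, rfl⟩
  exact key π h1 h2 h3 h4
end
end

section
/- Let N ≥ 2, let Ω be a convex bounded domain in ℝ^d whose boundary has Lebesgue measure zero, let μ be normalized Lebesgue measure on Ω, and let u_1,…,u_{N−1} : Ω → ℝ^d be bounded measurable vector fields. If ∫_{Ω^N} ∑_{ℓ=1}^{N−1} ⟨u_ℓ(x_1), x_1 − x_{ℓ+1}⟩ dπ ≥ 0 for every σ-invariant probability measure π on Ω^N with first marginal μ, then for every μ-measure-preserving map S : Ω → Ω with S^N = identity μ-a.e., one has ∫_Ω ∑_{ℓ=1}^{N−1} ⟨u_ℓ(x), x − S^ℓ x⟩ dμ(x) ≥ 0; consequently inf{ ∫_Ω ∑_{ℓ=1}^{N−1} ⟨u_ℓ(x), x − S^ℓ x⟩ dμ : S ∈ S_N(Ω,μ) } = 0, attained at S = identity. -/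
open MeasureTheory Finset
open scoped BigOperators RealInnerProductSpace
open scoped Fin.NatCast

noncomputable section

theorem statement11 {d : ℕ} (N : ℕ) [NeZero N] (hN : 2 ≤ N)
    (Ω : Set (Ed d)) (hΩopen : IsOpen Ω) (hΩconv : Convex ℝ Ω)
    (hΩbdd : Bornology.IsBounded Ω) (hΩne : Ω.Nonempty)
    -- the boundary of `Ω` has Lebesgue measure zero
    (hΩfr : volume (frontier Ω) = 0)
    -- `μ` is normalized Lebesgue measure on `Ω`
    (μ : Measure (Ed d)) (hμ : μ = (volume Ω)⁻¹ • volume.restrict Ω)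
    (u : ℕ → Ed d → Ed d)
    (humeas : ∀ ℓ ∈ Icc 1 (N - 1), Measurable (u ℓ))
    (hubdd : ∀ ℓ ∈ Icc 1 (N - 1), ∃ C : ℝ, ∀ x ∈ Ω, ‖u ℓ x‖ ≤ C)
    -- the Monge–Kantorovich cost is nonnegative for every `σ`-invariant probability
    -- measure `π` on `Ω^N` with first marginal `μ`
    (hMK : ∀ π : Measure (Fin N → Ed d), IsProbabilityMeasure π →
      π {y : Fin N → Ed d | ∀ i, y i ∈ Ω}ᶜ = 0 →
      Measure.map cyc π = π →
      Measure.map (fun y : Fin N → Ed d => y 0) π = μ →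
      0 ≤ ∫ y, ∑ ℓ ∈ Icc 1 (N - 1), ⟪u ℓ (y 0), y 0 - y (ℓ : Fin N)⟫ ∂π) :
    -- for every measure-preserving `N`-involution `S` of `Ω`, the cost is nonnegative
    (∀ S : Ed d → Ed d, MeasurePreserving S μ μ → Set.MapsTo S Ω Ω →
      (∀ᵐ x ∂μ, S^[N] x = x) →
      0 ≤ ∫ x, ∑ ℓ ∈ Icc 1 (N - 1), ⟪u ℓ x, x - S^[ℓ] x⟫ ∂μ) ∧
    -- consequently the infimum over `S_N(Ω,μ)` is zero, attained at the identity
    IsLeast {r : ℝ | ∃ S : Ed d → Ed d, MeasurePreserving S μ μ ∧ Set.MapsTo S Ω Ω ∧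
      (∀ᵐ x ∂μ, S^[N] x = x) ∧
      r = ∫ x, ∑ ℓ ∈ Icc 1 (N - 1), ⟪u ℓ x, x - S^[ℓ] x⟫ ∂μ} 0 := by
  have hΩmeas : MeasurableSet Ω := hΩopen.measurableSet
  have hvolpos : volume Ω ≠ 0 := (hΩopen.measure_pos volume hΩne).ne'
  have hvolfin : volume Ω ≠ ⊤ := hΩbdd.measure_lt_top.ne
  subst hμ
  set μ : Measure (Ed d) := (volume Ω)⁻¹ • volume.restrict Ω with hμdef
  have hprob : IsProbabilityMeasure μ := by
    constructor
    simp [hμdef, Measure.restrict_apply_univ, ENNReal.inv_mul_cancel hvolpos hvolfin]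
  have hμc : μ Ωᶜ = 0 := by
    simp [hμdef, Measure.restrict_apply hΩmeas.compl]
  have key : ∀ S : Ed d → Ed d, MeasurePreserving S μ μ → Set.MapsTo S Ω Ω →
      (∀ᵐ x ∂μ, S^[N] x = x) →
      0 ≤ ∫ x, ∑ ℓ ∈ Icc 1 (N - 1), ⟪u ℓ x, x - S^[ℓ] x⟫ ∂μ := by
    intro S hS hmaps hper
    set T : Ed d → (Fin N → Ed d) := fun x i => S^[(i : ℕ)] x with hT
    have hTmeas : Measurable T := measurable_pi_lambda _ fun i => hS.measurable.iterate _
    set π := μ.map T with hπ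
    have hprobπ : IsProbabilityMeasure π := Measure.isProbabilityMeasure_map hTmeas.aemeasurable
    have hsetmeas : MeasurableSet {y : Fin N → Ed d | ∀ i, y i ∈ Ω} := by
      have : {y : Fin N → Ed d | ∀ i, y i ∈ Ω} = ⋂ i, (fun y : Fin N → Ed d => y i) ⁻¹' Ω := by
        ext y; simp
      rw [this]
      exact MeasurableSet.iInter fun i => (measurable_pi_apply i) hΩmeas
    have hsupp : π {y : Fin N → Ed d | ∀ i, y i ∈ Ω}ᶜ = 0 := by
      rw [hπ, Measure.map_apply hTmeas hsetmeas.compl]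
      refine measure_mono_null ?_ hμc
      intro x hx
      simp only [Set.mem_preimage, Set.mem_compl_iff, Set.mem_setOf_eq, not_forall] at hx ⊢
      intro hxΩ
      obtain ⟨i, hi⟩ := hx
      exact hi ((hmaps.iterate (i : ℕ)) hxΩ)
    have hcycmeas : Measurable (cyc (N := N) (α := Ed d)) :=
      measurable_pi_lambda _ fun i => measurable_pi_apply _
    obtain ⟨n, rfl⟩ : ∃ n, N = n + 1 := ⟨N - 1, (Nat.succ_pred_eq_of_pos (by omega)).symm⟩
    have haeeq : cyc ∘ T =ᵐ[μ] T ∘ S := by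
      filter_upwards [hper] with x hx
      funext i
      show T x (finRotate (n + 1) i) = S^[(i : ℕ)] (S x)
      rw [← Function.iterate_succ_apply]
      rw [finRotate_succ_apply]
      show S^[((i + 1 : Fin (n+1)) : ℕ)] x = S^[(i : ℕ) + 1] x
      rcases eq_or_ne i (Fin.last n) with h | h
      · subst h
        have h1 : ((Fin.last n + 1 : Fin (n+1)) : ℕ) = 0 := by
          simp [Fin.last_add_one]
        have h2 : ((Fin.last n : Fin (n+1)) : ℕ) + 1 = n + 1 := by simp
        rw [h1, h2]
        exact hx.symm
      · rw [Fin.val_add_one_of_lt (Fin.lt_last_iff_ne_last.mpr h)]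
    have hmap : Measure.map cyc π = π := by
      rw [hπ, Measure.map_map hcycmeas hTmeas, Measure.map_congr haeeq,
        ← Measure.map_map hTmeas hS.measurable, hS.map_eq]
    have hmarg : Measure.map (fun y : Fin (n+1) → Ed d => y 0) π = μ := by
      rw [hπ, Measure.map_map (measurable_pi_apply 0) hTmeas]
      have h0 : (fun y : Fin (n+1) → Ed d => y 0) ∘ T = id := by
        funext x
        show S^[((0 : Fin (n+1)) : ℕ)] x = x
        simp
      rw [h0, Measure.map_id]
    have hFmeas : Measurable (fun y : Fin (n+1) → Ed d =>
        ∑ ℓ ∈ Icc 1 (n + 1 - 1), ⟪u ℓ (y 0), y 0 - y (ℓ : Fin (n+1))⟫) := by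
      refine Finset.measurable_sum _ fun ℓ hℓ => ?_
      exact ((humeas ℓ hℓ).comp (measurable_pi_apply 0)).inner
        ((measurable_pi_apply 0).sub (measurable_pi_apply _))
    have hMK' := hMK π hprobπ hsupp hmap hmarg
    rw [hπ, integral_map hTmeas.aemeasurable hFmeas.aestronglyMeasurable] at hMK'
    refine hMK'.trans_eq (integral_congr_ae (Filter.Eventually.of_forall fun x => ?_))
    refine Finset.sum_congr rfl fun ℓ hℓ => ?_
    have hℓlt : ℓ < n + 1 := by
      simp only [Finset.mem_Icc] at hℓ; omega
    have h0 : T x 0 = x := by show S^[((0 : Fin (n+1)) : ℕ)] x = x; simp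
    have h1 : T x (ℓ : Fin (n+1)) = S^[ℓ] x := by
      show S^[(((ℓ : Fin (n+1))) : ℕ)] x = S^[ℓ] x
      rw [Fin.val_cast_of_lt hℓlt]
    rw [h0, h1]
  refine ⟨key, ?_, ?_⟩
  · refine ⟨id, MeasurePreserving.id μ, Set.mapsTo_id Ω, ?_, ?_⟩
    · filter_upwards with x; simp [Function.iterate_id]
    · symm
      have : ∀ x : Ed d, ∑ ℓ ∈ Icc 1 (N - 1), ⟪u ℓ x, x - id^[ℓ] x⟫ = (0 : ℝ) := by
        intro x
        refine Finset.sum_eq_zero fun ℓ _ => ?_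
        simp [Function.iterate_id]
      simp only [this, integral_zero]
  · rintro r ⟨S, h1, h2, h3, rfl⟩
    exact key S h1 h2 h3
end
end

section
/- Let N ≥ 2, let Ω be a convex bounded domain in ℝ^d whose boundary has Lebesgue measure zero, let μ be normalized Lebesgue measure on Ω, and let u_1,…,u_{N−1} : Ω → ℝ^d be bounded measurable vector fields. If ∫_Ω ∑_{ℓ=1}^{N−1} ⟨u_ℓ(x), x − S^ℓ x⟩ dμ(x) ≥ 0 for every μ-measure-preserving map S : Ω → Ω with S^N = identity μ-a.e., then there is a set Ω_0 of measure zero such that the (N−1)-tuple (u_1,…,u_{N−1}) is jointly N-monotone on Ω ∖ Ω_0. -/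
open MeasureTheory Finset
open scoped BigOperators RealInnerProductSpace

noncomputable section

open Metric Filter
open scoped Topology
open Fin.NatCast

section Construction

variable {d N : ℕ}

set_option maxHeartbeats 1000000 in
private lemma construction [NeZero N] (hN : 2 ≤ N)
    (Ω : Set (Ed d)) (hΩmeas : MeasurableSet Ω)
    (hΩvol0 : volume Ω ≠ 0) (hΩvolT : volume Ω ≠ ⊤)
    (R : ℝ) (hR : Ω ⊆ closedBall 0 R)
    (u : ℕ → Ed d → Ed d)
    (humeas : ∀ ℓ ∈ Icc 1 (N - 1), Measurable (u ℓ))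
    (C : ℝ) (hubdd : ∀ ℓ ∈ Icc 1 (N - 1), ∀ x ∈ Ω, ‖u ℓ x‖ ≤ C)
    (hS : ∀ S : Ed d → Ed d,
      MeasurePreserving S ((volume Ω)⁻¹ • volume.restrict Ω)
        ((volume Ω)⁻¹ • volume.restrict Ω) →
      Set.MapsTo S Ω Ω →
      (∀ᵐ x ∂((volume Ω)⁻¹ • volume.restrict Ω), S^[N] x = x) →
      0 ≤ ∫ x, ∑ ℓ ∈ Icc 1 (N - 1), ⟪u ℓ x, x - S^[ℓ] x⟫
            ∂((volume Ω)⁻¹ • volume.restrict Ω))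
    (c : Fin N → Ed d) (ρ : ℝ) (hρ : 0 < ρ)
    (hsep : ∀ i j : Fin N, i ≠ j → 2 * ρ < dist (c i) (c j))
    (hsub : ∀ j, closedBall (c j) ρ ⊆ Ω) :
    0 ≤ ∑ j : Fin N, ∑ ℓ ∈ Icc 1 (N - 1),
        ⟪∫ x in closedBall (c j) ρ, u ℓ x, c j - c (j + (ℓ : Fin N))⟫ := by
  classical
  set B : Fin N → Set (Ed d) := fun j => closedBall (c j) ρ with hB
  set t : Fin N → Ed d := fun j => c (j + 1) - c j with ht
  set S : Ed d → Ed d := fun x => x + ∑ j : Fin N, (B j).indicator (fun _ => t j) x with hSdef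
  have hBmeas : ∀ j, MeasurableSet (B j) := fun j => measurableSet_closedBall
  have hdisj : ∀ i j : Fin N, i ≠ j → Disjoint (B i) (B j) := fun i j h =>
    closedBall_disjoint_closedBall (by have := hsep i j h; linarith)
  have huniq : ∀ {x : Ed d} {i j : Fin N}, x ∈ B i → x ∈ B j → i = j := by
    intro x i j hi hj
    by_contra h
    exact (hdisj i j h).le_bot ⟨hi, hj⟩
  have hSmem : ∀ {j : Fin N} {x : Ed d}, x ∈ B j → S x = x + t j := by
    intro j x hx
    have hsum : ∑ j' : Fin N, (B j').indicator (fun _ => t j') x = t j := by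
      rw [Finset.sum_eq_single j]
      · simp [Set.indicator_of_mem hx]
      · intro j' _ hj'
        exact Set.indicator_of_notMem (fun hx' => hj' (huniq hx' hx)) _
      · simp
    simp [hSdef, hsum]
  have hSnot : ∀ {x : Ed d}, (∀ j, x ∉ B j) → S x = x := by
    intro x hx
    have hsum : ∑ j' : Fin N, (B j').indicator (fun _ => t j') x = 0 :=
      Finset.sum_eq_zero fun j' _ => Set.indicator_of_notMem (hx j') _
    simp [hSdef, hsum]
  have hmeasS : Measurable S :=
    measurable_id.add (Finset.measurable_sum _ fun j _ =>
      (measurable_const.indicator (hBmeas j)))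
  have hBmem : ∀ (j : Fin N) (x : Ed d), x ∈ B j ↔ dist x (c j) ≤ ρ := by
    intro j x; rw [hB]; exact mem_closedBall
  have htj : ∀ j, t j = c (j + 1) - c j := fun j => rfl
  have hsubB : ∀ j, B j ⊆ Ω := hsub
  clear_value B t S
  clear ht hSdef hsub
  have hmaps : ∀ {j : Fin N} {x : Ed d}, x ∈ B j → S x ∈ B (j + 1) := by
    intro j x hx
    rw [hSmem hx, hBmem, dist_eq_norm]
    rw [hBmem, dist_eq_norm] at hx
    have : x + t j - c (j + 1) = x - c j := by rw [htj]; abel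
    rwa [this]
  have hiter : ∀ (ℓ : ℕ) (j : Fin N) {x : Ed d}, x ∈ B j →
      S^[ℓ] x = x + (c (j + (ℓ : Fin N)) - c j) := by
    intro ℓ
    induction ℓ with
    | zero => intro j x hx; simp
    | succ n ih =>
        intro j x hx
        have hmem : x + t j ∈ B (j + 1) := by
          have h' := hmaps hx
          rwa [hSmem hx] at h'
        rw [Function.iterate_succ_apply, hSmem hx, ih (j + 1) hmem]
        have hcast : (j + 1 + (n : Fin N)) = j + ((n + 1 : ℕ) : Fin N) := by
          push_cast
          abel
        rw [hcast, htj]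
        abel
  have hiter_not : ∀ (ℓ : ℕ) {x : Ed d}, (∀ j, x ∉ B j) → S^[ℓ] x = x := by
    intro ℓ
    induction ℓ with
    | zero => intro x _; simp
    | succ n ih => intro x hx; rw [Function.iterate_succ_apply, hSnot hx]; exact ih hx
  have hSN : ∀ x, S^[N] x = x := by
    intro x
    by_cases hx : ∃ j, x ∈ B j
    · obtain ⟨j, hj⟩ := hx
      rw [hiter N j hj, Fin.natCast_self]
      simp
    · push_neg at hx
      exact hiter_not N hx
  have hpreΩ : S ⁻¹' Ω = Ω := by
    ext x
    constructor
    · intro hx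
      by_contra h
      have hnb : ∀ j, x ∉ B j := fun j hj => h (hsubB j hj)
      rw [Set.mem_preimage, hSnot hnb] at hx
      exact h hx
    · intro hx
      by_cases h : ∃ j, x ∈ B j
      · obtain ⟨j, hj⟩ := h
        exact Set.mem_preimage.2 (hsubB (j + 1) (hmaps hj))
      · push_neg at h
        simpa [Set.mem_preimage, hSnot h]
  have hvol : ∀ A : Set (Ed d), MeasurableSet A → volume (S ⁻¹' A) = volume A := by
    intro A hA
    set U : Set (Ed d) := ⋃ j, B j with hU
    have hUmeas : MeasurableSet U := MeasurableSet.iUnion fun j => hBmeas j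
    have hpre : MeasurableSet (S ⁻¹' A) := hmeasS hA
    have h2 : S ⁻¹' A \ U = A \ U := by
      ext x
      have hid : x ∉ U → S x = x := fun hnu =>
        hSnot fun j hj => hnu (Set.mem_iUnion.2 ⟨j, hj⟩)
      simp only [Set.mem_diff, Set.mem_preimage]
      constructor
      · rintro ⟨h, hnu⟩; exact ⟨by rwa [hid hnu] at h, hnu⟩
      · rintro ⟨h, hnu⟩; exact ⟨by rwa [hid hnu], hnu⟩
    have hdisjint : ∀ W : Set (Ed d), Pairwise fun i j => Disjoint (W ∩ B i) (W ∩ B j) :=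
      fun W i j hij => (hdisj i j hij).mono Set.inter_subset_right Set.inter_subset_right
    have hmeassum : ∀ W : Set (Ed d), MeasurableSet W →
        volume (W ∩ U) = ∑ j : Fin N, volume (W ∩ B j) := by
      intro W hW
      rw [hU, Set.inter_iUnion, measure_iUnion (hdisjint W) fun j => hW.inter (hBmeas j),
        tsum_fintype]
    have h5 : ∀ j, volume (S ⁻¹' A ∩ B j) = volume (A ∩ B (j + 1)) := by
      intro j
      have hset : S ⁻¹' A ∩ B j = (fun x => x + t j) ⁻¹' (A ∩ B (j + 1)) := by
        ext x
        simp only [Set.mem_inter_iff, Set.mem_preimage]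
        constructor
        · rintro ⟨hxa, hxb⟩
          refine ⟨by rwa [hSmem hxb] at hxa, ?_⟩
          have h' := hmaps hxb
          rwa [hSmem hxb] at h'
        · rintro ⟨hxa, hxb⟩
          have hxB : x ∈ B j := by
            rw [hBmem] at hxb ⊢
            rw [dist_eq_norm] at hxb ⊢
            have : x + t j - c (j + 1) = x - c j := by rw [htj]; abel
            rwa [this] at hxb
          exact ⟨by rwa [hSmem hxB], hxB⟩
      rw [hset, measure_preimage_add_right]
    have h6 : ∑ j : Fin N, volume (A ∩ B (j + 1)) = ∑ j : Fin N, volume (A ∩ B j) :=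
      Fintype.sum_equiv (Equiv.addRight (1 : Fin N)) _ _ fun j => rfl
    calc volume (S ⁻¹' A)
        = volume (S ⁻¹' A ∩ U) + volume (S ⁻¹' A \ U) :=
          (measure_inter_add_diff _ hUmeas).symm
      _ = (∑ j : Fin N, volume (S ⁻¹' A ∩ B j)) + volume (A \ U) := by
          rw [hmeassum _ hpre, h2]
      _ = (∑ j : Fin N, volume (A ∩ B (j + 1))) + volume (A \ U) := by
          simp_rw [h5]
      _ = volume (A ∩ U) + volume (A \ U) := by rw [h6, hmeassum _ hA]
      _ = volume A := measure_inter_add_diff _ hUmeas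
  have hmp : MeasurePreserving S ((volume Ω)⁻¹ • volume.restrict Ω)
      ((volume Ω)⁻¹ • volume.restrict Ω) := by
    refine ⟨hmeasS, ?_⟩
    ext A hA
    rw [Measure.map_apply hmeasS hA, Measure.smul_apply, Measure.smul_apply,
      Measure.restrict_apply hA, Measure.restrict_apply (hmeasS hA)]
    congr 1
    rw [show S ⁻¹' A ∩ Ω = S ⁻¹' (A ∩ Ω) by rw [Set.preimage_inter, hpreΩ]]
    exact hvol _ (hA.inter hΩmeas)
  have hmapsto : Set.MapsTo S Ω Ω := fun x hx => (hpreΩ.symm ▸ hx : x ∈ S ⁻¹' Ω)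
  have hkey := hS S hmp hmapsto (ae_of_all _ hSN)
  set f : Ed d → ℝ := fun x => ∑ ℓ ∈ Icc 1 (N - 1), ⟪u ℓ x, x - S^[ℓ] x⟫ with hf
  have hiterMeas : ∀ ℓ : ℕ, Measurable S^[ℓ] := fun ℓ => hmeasS.iterate ℓ
  have hfmeas : Measurable f :=
    Finset.measurable_sum _ fun ℓ hℓ =>
      (humeas ℓ hℓ).inner (measurable_id.sub (hiterMeas ℓ))
  have hΩne : Ω.Nonempty := by
    rcases Set.eq_empty_or_nonempty Ω with h | h
    · exact absurd (by simp [h]) hΩvol0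
    · exact h
  have hC0 : 0 ≤ C := by
    obtain ⟨x0, hx0⟩ := hΩne
    have h1 : (1 : ℕ) ∈ Icc 1 (N - 1) := by
      rw [Finset.mem_Icc]; omega
    exact le_trans (norm_nonneg _) (hubdd 1 h1 x0 hx0)
  have hfbdd : ∀ x ∈ Ω, ‖f x‖ ≤ (N : ℝ) * (C * (2 * R)) := by
    intro x hx
    have hxR : ‖x‖ ≤ R := mem_closedBall_zero_iff.1 (hR hx)
    have hR0 : 0 ≤ R := le_trans (norm_nonneg _) hxR
    calc ‖f x‖ ≤ ∑ ℓ ∈ Icc 1 (N - 1), ‖(⟪u ℓ x, x - S^[ℓ] x⟫ : ℝ)‖ := norm_sum_le _ _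
      _ ≤ ∑ _ℓ ∈ Icc 1 (N - 1), C * (2 * R) := by
          apply Finset.sum_le_sum
          intro ℓ hℓ
          have h1 : ‖u ℓ x‖ ≤ C := hubdd ℓ hℓ x hx
          have hxl : S^[ℓ] x ∈ Ω := hmapsto.iterate ℓ hx
          have h2 : ‖x - S^[ℓ] x‖ ≤ 2 * R := by
            calc ‖x - S^[ℓ] x‖ ≤ ‖x‖ + ‖S^[ℓ] x‖ := norm_sub_le _ _
              _ ≤ R + R := add_le_add hxR (mem_closedBall_zero_iff.1 (hR hxl))
              _ = 2 * R := by ring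
          calc ‖(⟪u ℓ x, x - S^[ℓ] x⟫ : ℝ)‖ ≤ ‖u ℓ x‖ * ‖x - S^[ℓ] x‖ :=
                norm_inner_le_norm _ _
            _ ≤ C * (2 * R) := by
                apply mul_le_mul h1 h2 (norm_nonneg _) hC0
      _ ≤ (N : ℝ) * (C * (2 * R)) := by
          rw [Finset.sum_const, nsmul_eq_mul]
          apply mul_le_mul_of_nonneg_right _ (by positivity)
          · rw [Nat.card_Icc]
            exact Nat.cast_le.2 (by omega)
  haveI hfinres : IsFiniteMeasure (volume.restrict Ω : Measure (Ed d)) :=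
    ⟨by rw [Measure.restrict_apply_univ]; exact lt_top_iff_ne_top.2 hΩvolT⟩
  have hfint : IntegrableOn f Ω := by
    refine Integrable.mono' (integrable_const ((N : ℝ) * (C * (2 * R))))
      hfmeas.aestronglyMeasurable ?_
    exact (ae_restrict_iff' hΩmeas).2 (ae_of_all _ hfbdd)
  have hpos : 0 < ((volume Ω)⁻¹).toReal :=
    ENNReal.toReal_pos (ENNReal.inv_ne_zero.2 hΩvolT) (ENNReal.inv_ne_top.2 hΩvol0)
  have hI : 0 ≤ ∫ x in Ω, f x := by
    rw [integral_smul_measure] at hkey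
    by_contra hneg
    push_neg at hneg
    have hlt : ((volume Ω)⁻¹).toReal • ∫ x in Ω, f x < 0 := by
      rw [smul_eq_mul]
      exact mul_neg_of_pos_of_neg hpos hneg
    exact absurd hkey (not_le.2 hlt)
  set U : Set (Ed d) := ⋃ j, B j with hU2
  have hUmeas : MeasurableSet U := MeasurableSet.iUnion fun j => hBmeas j
  have hUsub : U ⊆ Ω := Set.iUnion_subset hsubB
  have hIU : ∫ x in Ω, f x = ∫ x in U, f x := by
    apply setIntegral_eq_of_subset_of_forall_diff_eq_zero hΩmeas hUsub
    intro x hx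
    have hnb : ∀ j, x ∉ B j := fun j hj => hx.2 (Set.mem_iUnion.2 ⟨j, hj⟩)
    rw [hf]
    apply Finset.sum_eq_zero
    intro ℓ _
    rw [hiter_not ℓ hnb]
    simp
  have hIsum : ∫ x in U, f x = ∑ j : Fin N, ∫ x in B j, f x := by
    rw [hU2, integral_iUnion hBmeas (fun i j h => hdisj i j h)
      (hfint.mono_set hUsub), tsum_fintype]
  have huint : ∀ (j : Fin N), ∀ ℓ ∈ Icc 1 (N - 1), IntegrableOn (u ℓ) (B j) := by
    intro j ℓ hℓ
    haveI : IsFiniteMeasure (volume.restrict (B j) : Measure (Ed d)) := ⟨by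
      rw [Measure.restrict_apply_univ]
      exact lt_of_le_of_lt (measure_mono (hsubB j)) (lt_top_iff_ne_top.2 hΩvolT)⟩
    refine Integrable.mono' (integrable_const C) (humeas ℓ hℓ).aestronglyMeasurable ?_
    exact (ae_restrict_iff' (hBmeas j)).2
      (ae_of_all _ fun x hx => hubdd ℓ hℓ x (hsubB j hx))
  have hBint : ∀ j : Fin N, ∫ x in B j, f x
      = ∑ ℓ ∈ Icc 1 (N - 1), ⟪∫ x in B j, u ℓ x, c j - c (j + (ℓ : Fin N))⟫ := by
    intro j
    have hcongr : Set.EqOn f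
        (fun x => ∑ ℓ ∈ Icc 1 (N - 1), ⟪u ℓ x, c j - c (j + (ℓ : Fin N))⟫) (B j) := by
      intro x hx
      apply Finset.sum_congr rfl
      intro ℓ _
      rw [hiter ℓ j hx]
      congr 1
      abel
    rw [setIntegral_congr_fun (hBmeas j) hcongr,
      integral_finset_sum _ (fun ℓ hℓ => (huint j ℓ hℓ).inner_const _)]
    apply Finset.sum_congr rfl
    intro ℓ hℓ
    calc ∫ x in B j, ⟪u ℓ x, c j - c (j + (ℓ : Fin N))⟫
        = ∫ x in B j, ⟪c j - c (j + (ℓ : Fin N)), u ℓ x⟫ := by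
          simp_rw [real_inner_comm]
      _ = ⟪c j - c (j + (ℓ : Fin N)), ∫ x in B j, u ℓ x⟫ :=
          integral_inner (huint j ℓ hℓ) _
      _ = ⟪∫ x in B j, u ℓ x, c j - c (j + (ℓ : Fin N))⟫ := real_inner_comm _ _
  have hfinal : ∫ x in Ω, f x = ∑ j : Fin N, ∑ ℓ ∈ Icc 1 (N - 1),
      ⟪∫ x in B j, u ℓ x, c j - c (j + (ℓ : Fin N))⟫ := by
    rw [hIU, hIsum]
    exact Finset.sum_congr rfl fun j _ => hBint j
  rw [hfinal] at hI
  simpa only [hB] using hI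




private lemma exists_sep {ι α : Type*} [MetricSpace α] [Fintype ι] [Nonempty ι]
    (z : ι → α) (c : ℝ) (hc : 0 < c) :
    ∃ ρ₀ > 0, ∀ i j : ι, z i ≠ z j → c * ρ₀ ≤ dist (z i) (z j) := by
  classical
  have hne : (Finset.univ : Finset (ι × ι)).Nonempty := Finset.univ_nonempty
  set m := Finset.univ.inf' hne
    (fun p : ι × ι => if z p.1 = z p.2 then 1 else dist (z p.1) (z p.2)) with hm
  have hmpos : 0 < m := by
    rw [hm, Finset.lt_inf'_iff]
    intro p _
    by_cases h : z p.1 = z p.2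
    · simp [h]
    · simp [h, dist_pos.2 h]
  refine ⟨m / c, by positivity, fun i j hij => ?_⟩
  have hle : m ≤ dist (z i) (z j) := by
    have h2 := Finset.inf'_le
      (f := fun p : ι × ι => if z p.1 = z p.2 then 1 else dist (z p.1) (z p.2))
      (Finset.mem_univ (i, j))
    rw [← hm] at h2
    simpa [hij] using h2
  have h3 : c * (m / c) = m := by field_simp
  linarith

private lemma natcast_abs_sub_ge_one {a b : ℕ} (h : a ≠ b) : (1:ℝ) ≤ |(a:ℝ) - b| := by
  have h0 : ((a:ℤ) - b : ℤ) ≠ 0 := sub_ne_zero.2 (by exact_mod_cast h)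
  have h1 : (1:ℤ) ≤ |(a:ℤ) - b| := Int.one_le_abs h0
  have h2 : ((a:ℝ) - b) = (((a:ℤ) - b : ℤ) : ℝ) := by push_cast; ring
  rw [h2, ← Int.cast_abs]
  exact_mod_cast h1

set_option maxHeartbeats 1000000 in
private lemma key [NeZero N] (hN : 2 ≤ N)
    (Ω : Set (Ed d)) (hΩopen : IsOpen Ω)
    (hΩvol0 : volume Ω ≠ 0) (hΩvolT : volume Ω ≠ ⊤)
    (R : ℝ) (hR : Ω ⊆ closedBall 0 R)
    (u : ℕ → Ed d → Ed d)
    (humeas : ∀ ℓ ∈ Icc 1 (N - 1), Measurable (u ℓ))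
    (C : ℝ) (hubdd : ∀ ℓ ∈ Icc 1 (N - 1), ∀ x ∈ Ω, ‖u ℓ x‖ ≤ C)
    (hS : ∀ S : Ed d → Ed d,
      MeasurePreserving S ((volume Ω)⁻¹ • volume.restrict Ω)
        ((volume Ω)⁻¹ • volume.restrict Ω) →
      Set.MapsTo S Ω Ω →
      (∀ᵐ x ∂((volume Ω)⁻¹ • volume.restrict Ω), S^[N] x = x) →
      0 ≤ ∫ x, ∑ ℓ ∈ Icc 1 (N - 1), ⟪u ℓ x, x - S^[ℓ] x⟫
            ∂((volume Ω)⁻¹ • volume.restrict Ω))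
    (e : Ed d) (he : ‖e‖ = 1)
    (z : Fin N → Ed d) (hz : ∀ j, z j ∈ Ω)
    (hleb : ∀ (j : Fin N), ∀ ℓ ∈ Icc 1 (N - 1),
      ∀ (w : ℝ → Ed d) (δ : ℝ → ℝ), Filter.Tendsto δ (𝓝[>] 0) (𝓝[>] 0) →
        (∀ᶠ r in 𝓝[>] (0:ℝ), z j ∈ closedBall (w r) ((4 * N + 1) * δ r)) →
        Filter.Tendsto (fun r => ⨍ y in closedBall (w r) (δ r), Ω.indicator (u ℓ) y)
          (𝓝[>] (0:ℝ)) (𝓝 (Ω.indicator (u ℓ) (z j)))) :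
    0 ≤ ∑ j : Fin N, ∑ ℓ ∈ Icc 1 (N - 1),
        ⟪u ℓ (z j), z j - z (j + (ℓ : Fin N))⟫ := by
  classical
  haveI : Nonempty (Fin N) := ⟨⟨0, Nat.pos_of_ne_zero (NeZero.ne N)⟩⟩
  have hΩmeas : MeasurableSet Ω := hΩopen.measurableSet
  have hNpos : (0:ℝ) < N := by
    have : (2:ℝ) ≤ N := by exact_mod_cast hN
    linarith
  -- radius for balls inside Ω
  obtain ⟨δ, hδ0, hδΩ⟩ : ∃ δ > 0, ∀ j, closedBall (z j) δ ⊆ Ω := by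
    have h : ∀ j : Fin N, ∃ ε > 0, closedBall (z j) ε ⊆ Ω := fun j =>
      Metric.nhds_basis_closedBall.mem_iff.1 (hΩopen.mem_nhds (hz j))
    choose ε hε1 hε2 using h
    refine ⟨Finset.univ.inf' Finset.univ_nonempty ε, ?_, fun j => ?_⟩
    · simp only [gt_iff_lt, Finset.lt_inf'_iff]
      exact fun j _ => hε1 j
    · exact (closedBall_subset_closedBall
        (Finset.inf'_le _ (Finset.mem_univ j))).trans (hε2 j)
  -- separation radius
  obtain ⟨ρ₀, hρ₀, hsepz⟩ :
      ∃ ρ₀ > 0, ∀ i j : Fin N, z i ≠ z j → 16 * N * ρ₀ ≤ dist (z i) (z j) :=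
    exists_sep z (16 * N) (by positivity)
  set ρ₁ := min (δ / (4 * N + 1)) ρ₀ with hρ₁def
  have hρ₁ : 0 < ρ₁ := lt_min (by positivity) hρ₀
  -- moving centers
  set Y : ℝ → Fin N → Ed d := fun ρ j => z j + ((4 * j.val * ρ : ℝ)) • e with hY
  have hYdist : ∀ (ρ : ℝ), 0 ≤ ρ → ∀ j, dist (Y ρ j) (z j) ≤ 4 * N * ρ := by
    intro ρ hρ j
    have h1 : Y ρ j - z j = (4 * j.val * ρ : ℝ) • e := by
      show z j + (4 * j.val * ρ : ℝ) • e - z j = _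
      exact add_sub_cancel_left _ _
    rw [dist_eq_norm, h1, norm_smul, he, mul_one, Real.norm_eq_abs,
      abs_of_nonneg (by positivity)]
    have h2 : (j.val : ℝ) ≤ N := by exact_mod_cast le_of_lt j.isLt
    nlinarith
  -- constraints
  have hconstr : ∀ ρ ∈ Set.Ioc (0:ℝ) ρ₁,
      (∀ i j : Fin N, i ≠ j → 2 * ρ < dist (Y ρ i) (Y ρ j)) ∧
      (∀ j, closedBall (Y ρ j) ρ ⊆ Ω) := by
    rintro ρ ⟨hρpos, hρle⟩
    have hρδ : (4 * N + 1) * ρ ≤ δ := by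
      have h1 : ρ ≤ δ / (4 * N + 1) := le_trans hρle (min_le_left _ _)
      rw [le_div_iff₀ (by positivity)] at h1
      linarith
    have hρρ₀ : ρ ≤ ρ₀ := le_trans hρle (min_le_right _ _)
    constructor
    · intro i j hij
      by_cases hzz : z i = z j
      · have hd : dist (Y ρ i) (Y ρ j) = 4 * ρ * |(i.val:ℝ) - j.val| := by
          have h3 : Y ρ i - Y ρ j = ((4 * i.val * ρ : ℝ) - 4 * j.val * ρ) • e := by
            rw [hY, sub_smul]
            simp only
            rw [hzz]
            abel
          rw [dist_eq_norm, h3, norm_smul, he, mul_one, Real.norm_eq_abs,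
            show (4 * (i.val:ℝ) * ρ - 4 * j.val * ρ) = 4 * ρ * ((i.val:ℝ) - j.val) by ring,
            abs_mul, abs_of_nonneg (by positivity)]
        rw [hd]
        have h1 : (1:ℝ) ≤ |(i.val:ℝ) - j.val| :=
          natcast_abs_sub_ge_one (fun h => hij (Fin.ext h))
        nlinarith
      · have h1 : 16 * N * ρ₀ ≤ dist (z i) (z j) := hsepz i j hzz
        have h2 := hYdist ρ hρpos.le i
        have h3 := hYdist ρ hρpos.le j
        have h4 : dist (z i) (z j) ≤
            dist (z i) (Y ρ i) + dist (Y ρ i) (Y ρ j) + dist (Y ρ j) (z j) :=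
          dist_triangle4 _ _ _ _
        have h7 : dist (z i) (Y ρ i) = dist (Y ρ i) (z i) := dist_comm _ _
        have hN2 : (2:ℝ) ≤ N := by exact_mod_cast hN
        have hN1 : (1:ℝ) ≤ N := by linarith
        have h5 : 16 * ((N:ℝ) * ρ) ≤ 16 * ((N:ℝ) * ρ₀) := by nlinarith
        have h6 : ρ ≤ (N:ℝ) * ρ := by nlinarith
        linarith
    · intro j x hx
      apply hδΩ j
      rw [mem_closedBall] at hx ⊢
      calc dist x (z j) ≤ dist x (Y ρ j) + dist (Y ρ j) (z j) := dist_triangle _ _ _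
        _ ≤ ρ + 4 * N * ρ := add_le_add hx (hYdist ρ hρpos.le j)
        _ ≤ δ := by linarith
  -- the approximating functional
  set G : ℝ → ℝ := fun ρ => ∑ j : Fin N, ∑ ℓ ∈ Icc 1 (N - 1),
      ⟪⨍ x in closedBall (Y ρ j) ρ, Ω.indicator (u ℓ) x,
        Y ρ j - Y ρ (j + (ℓ : Fin N))⟫ with hG
  have hGnonneg : ∀ ρ ∈ Set.Ioc (0:ℝ) ρ₁, 0 ≤ G ρ := by
    intro ρ hρmem
    obtain ⟨hd, hsb⟩ := hconstr ρ hρmem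
    have hA := construction hN Ω hΩmeas hΩvol0 hΩvolT R hR u humeas C hubdd hS
      (Y ρ) ρ hρmem.1 hd hsb
    have hGeq : G ρ = ((volume (closedBall (0 : Ed d) ρ)).toReal)⁻¹ *
        ∑ j : Fin N, ∑ ℓ ∈ Icc 1 (N - 1),
          ⟪∫ x in closedBall (Y ρ j) ρ, u ℓ x, Y ρ j - Y ρ (j + (ℓ : Fin N))⟫ := by
      rw [hG, Finset.mul_sum]
      apply Finset.sum_congr rfl
      intro j _
      rw [Finset.mul_sum]
      apply Finset.sum_congr rfl
      intro ℓ _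
      rw [setAverage_eq, measureReal_def, Measure.addHaar_closedBall_center volume (Y ρ j),
        show ∫ x in closedBall (Y ρ j) ρ, Ω.indicator (u ℓ) x
            = ∫ x in closedBall (Y ρ j) ρ, u ℓ x from
          setIntegral_congr_fun measurableSet_closedBall
            (fun x hx => Set.indicator_of_mem (hsb j hx) _),
        real_inner_smul_left]
    rw [hGeq]
    exact mul_nonneg (inv_nonneg.2 ENNReal.toReal_nonneg) hA
  -- membership eventually
  have hmem_ev : ∀ j : Fin N, ∀ᶠ ρ in 𝓝[>] (0:ℝ),
      z j ∈ closedBall (Y ρ j) ((4 * N + 1) * ρ) := by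
    intro j
    filter_upwards [self_mem_nhdsWithin] with ρ hρ
    have hρ' : (0:ℝ) < ρ := hρ
    rw [mem_closedBall, dist_comm]
    calc dist (Y ρ j) (z j) ≤ 4 * N * ρ := hYdist ρ hρ'.le j
      _ ≤ (4 * N + 1) * ρ := by nlinarith
  -- convergence
  have hYtends : ∀ i : Fin N, Filter.Tendsto (fun ρ => Y ρ i) (𝓝[>] (0:ℝ)) (𝓝 (z i)) := by
    intro i
    have c1 : Continuous fun ρ : ℝ => z i + (4 * i.val * ρ : ℝ) • e := by
      apply continuous_const.add
      exact (continuous_const.mul continuous_id).smul continuous_const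
    have h2 : Filter.Tendsto (fun ρ : ℝ => z i + (4 * i.val * ρ : ℝ) • e)
        (𝓝 0) (𝓝 (z i + (4 * i.val * 0 : ℝ) • e)) := c1.tendsto 0
    simp only [mul_zero, zero_smul, add_zero] at h2
    exact h2.mono_left nhdsWithin_le_nhds
  have htends : Filter.Tendsto G (𝓝[>] (0:ℝ))
      (𝓝 (∑ j : Fin N, ∑ ℓ ∈ Icc 1 (N - 1),
        ⟪u ℓ (z j), z j - z (j + (ℓ : Fin N))⟫)) := by
    rw [hG]
    apply tendsto_finset_sum
    intro j _
    apply tendsto_finset_sum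
    intro ℓ hℓ
    have h1 : Filter.Tendsto (fun ρ => ⨍ x in closedBall (Y ρ j) ρ, Ω.indicator (u ℓ) x)
        (𝓝[>] (0:ℝ)) (𝓝 (Ω.indicator (u ℓ) (z j))) :=
      hleb j ℓ hℓ (fun ρ => Y ρ j) (fun ρ => ρ) tendsto_id (hmem_ev j)
    rw [Set.indicator_of_mem (hz j)] at h1
    exact h1.inner ((hYtends j).sub (hYtends (j + (ℓ : Fin N))))
  have hev : ∀ᶠ ρ in 𝓝[>] (0:ℝ), 0 ≤ G ρ := by
    filter_upwards [Ioc_mem_nhdsGT hρ₁] with ρ hρ using hGnonneg ρ hρ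
  exact ge_of_tendsto htends hev


end Construction

theorem statement12 {d : ℕ} (N : ℕ) [NeZero N] (hN : 2 ≤ N)
    (Ω : Set (Ed d)) (hΩopen : IsOpen Ω) (hΩconv : Convex ℝ Ω)
    (hΩbdd : Bornology.IsBounded Ω) (hΩne : Ω.Nonempty)
    -- the boundary of `Ω` has Lebesgue measure zero
    (hΩfr : volume (frontier Ω) = 0)
    -- `μ` is normalized Lebesgue measure on `Ω`
    (μ : Measure (Ed d)) (hμ : μ = (volume Ω)⁻¹ • volume.restrict Ω)
    (u : ℕ → Ed d → Ed d)
    (humeas : ∀ ℓ ∈ Icc 1 (N - 1), Measurable (u ℓ))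
    (hubdd : ∀ ℓ ∈ Icc 1 (N - 1), ∃ C : ℝ, ∀ x ∈ Ω, ‖u ℓ x‖ ≤ C)
    -- the cost is nonnegative for every measure-preserving `N`-involution of `Ω`
    (hS : ∀ S : Ed d → Ed d, MeasurePreserving S μ μ → Set.MapsTo S Ω Ω →
      (∀ᵐ x ∂μ, S^[N] x = x) →
      0 ≤ ∫ x, ∑ ℓ ∈ Icc 1 (N - 1), ⟪u ℓ x, x - S^[ℓ] x⟫ ∂μ) :
    -- then `(u 1, …, u (N-1))` is jointly `N`-monotone off a set of measure zero
    ∃ Ω₀ : Set (Ed d), volume Ω₀ = 0 ∧ JointlyNMonotone N (Ω \ Ω₀) u := by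
  classical
  subst hμ
  rcases subsingleton_or_nontrivial (Ed d) with hss | hnt
  · refine ⟨∅, measure_empty, ?_⟩
    intro x hx h2
    apply Finset.sum_nonneg
    intro i _
    apply Finset.sum_nonneg
    intro ℓ _
    rw [show x i - x (i + ℓ) = 0 from by
      rw [Subsingleton.elim (x i) (x (i + ℓ))]; exact sub_self _, inner_zero_right]
  obtain ⟨v0, hv0⟩ := exists_ne (0 : Ed d)
  have he : ‖(‖v0‖⁻¹ : ℝ) • v0‖ = 1 := norm_smul_inv_norm hv0
  set e : Ed d := (‖v0‖⁻¹ : ℝ) • v0 with he_def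
  have hΩvol0 : volume Ω ≠ 0 := (hΩopen.measure_pos volume hΩne).ne'
  have hΩvolT : volume Ω ≠ ⊤ := hΩbdd.measure_lt_top.ne
  obtain ⟨R, hR⟩ := hΩbdd.subset_closedBall 0
  -- a single uniform bound
  set g : ℕ → ℝ := fun ℓ => if h : ∃ C, ∀ x ∈ Ω, ‖u ℓ x‖ ≤ C then h.choose else 0 with hg
  have hgspec : ∀ ℓ ∈ Icc 1 (N - 1), ∀ x ∈ Ω, ‖u ℓ x‖ ≤ g ℓ := by
    intro ℓ hℓ
    have h := hubdd ℓ hℓ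
    rw [hg]
    simp only [dif_pos h]
    exact h.choose_spec
  obtain ⟨C, hCle⟩ : ∃ C : ℝ, ∀ ℓ ∈ Icc 1 (N - 1), ∀ x ∈ Ω, ‖u ℓ x‖ ≤ C := by
    refine ⟨∑ ℓ ∈ Icc 1 (N - 1), max (g ℓ) 0, fun ℓ hℓ x hx => ?_⟩
    have h1 : max (g ℓ) 0 ≤ ∑ ℓ ∈ Icc 1 (N - 1), max (g ℓ) 0 :=
      Finset.single_le_sum (f := fun i => max (g i) 0) (fun i _ => le_max_right _ _) hℓ
    exact le_trans (hgspec ℓ hℓ x hx) (le_trans (le_max_left _ _) h1)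
  -- local integrability of the truncated fields
  have hvmeas : ∀ ℓ ∈ Icc 1 (N - 1), Measurable (Ω.indicator (u ℓ)) :=
    fun ℓ hℓ => (humeas ℓ hℓ).indicator hΩopen.measurableSet
  have hvloc : ∀ ℓ ∈ Icc 1 (N - 1), LocallyIntegrable (Ω.indicator (u ℓ)) volume := by
    intro ℓ hℓ
    rw [locallyIntegrable_iff]
    intro K hK
    haveI : IsFiniteMeasure (volume.restrict K : Measure (Ed d)) :=
      ⟨by rw [Measure.restrict_apply_univ]; exact hK.measure_lt_top⟩
    refine Integrable.mono' (integrable_const (max C 0))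
      (hvmeas ℓ hℓ).aestronglyMeasurable (ae_of_all _ fun x => ?_)
    by_cases hx : x ∈ Ω
    · rw [Set.indicator_of_mem hx]
      exact le_trans (hCle ℓ hℓ x hx) (le_max_left _ _)
    · rw [Set.indicator_of_notMem hx]
      simp
  -- the Lebesgue-point property
  set p : Ed d → Prop := fun x => ∀ ℓ : ℕ, ℓ ∈ Icc 1 (N - 1) →
      ∀ (w : ℝ → Ed d) (δf : ℝ → ℝ), Filter.Tendsto δf (𝓝[>] 0) (𝓝[>] 0) →
        (∀ᶠ r in 𝓝[>] (0:ℝ), x ∈ closedBall (w r) ((4 * N + 1) * δf r)) →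
        Filter.Tendsto (fun r => ⨍ y in closedBall (w r) (δf r), Ω.indicator (u ℓ) y)
          (𝓝[>] (0:ℝ)) (𝓝 (Ω.indicator (u ℓ) x)) with hp
  have hae : ∀ᵐ x : Ed d, p x := by
    rw [hp, ae_all_iff]
    intro ℓ
    by_cases hℓ : ℓ ∈ Icc 1 (N - 1)
    · filter_upwards [IsUnifLocDoublingMeasure.ae_tendsto_average (μ := volume)
        (hvloc ℓ hℓ) (4 * N + 1)] with x hx
      intro _ w δf hδf hmem
      exact hx w δf hδf hmem
    · exact ae_of_all _ fun x h => absurd h hℓ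
  refine ⟨{x : Ed d | ¬ p x}, ae_iff.mp hae, ?_⟩
  intro x hx h2
  set z : Fin N → Ed d := fun j => x (j.val + 1) with hz
  have hzdef : ∀ j : Fin N, z j = x (j.val + 1) := fun j => rfl
  have hxmem : ∀ j : Fin N, x (j.val + 1) ∈ Ω \ {x : Ed d | ¬ p x} := by
    intro j
    have hj := j.isLt
    exact hx (j.val + 1) (by omega) (by omega)
  have hzmem : ∀ j, z j ∈ Ω := fun j => (hxmem j).1
  have hzleb : ∀ j, p (z j) := fun j => not_not.1 (hxmem j).2
  have hkey := key hN Ω hΩopen hΩvol0 hΩvolT R hR u humeas C hCle hS e he z hzmem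
    (fun j ℓ hℓ => hzleb j ℓ hℓ)
  have hNpos : 0 < N := by omega
  have hconv : ∑ i ∈ Icc 1 N, ∑ ℓ ∈ Icc 1 (N - 1), ⟪u ℓ (x i), x i - x (i + ℓ)⟫
      = ∑ j : Fin N, ∑ ℓ ∈ Icc 1 (N - 1),
          ⟪u ℓ (z j), z j - z (j + (ℓ : Fin N))⟫ := by
    refine Finset.sum_nbij' (fun i => (⟨(i - 1) % N, Nat.mod_lt _ hNpos⟩ : Fin N))
      (fun j : Fin N => j.val + 1) (fun a _ => Finset.mem_univ _) ?_ ?_ ?_ ?_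
    · intro j _
      have hj := j.isLt
      rw [Finset.mem_Icc]
      omega
    · intro a ha
      dsimp only
      rw [Finset.mem_Icc] at ha
      have h1 : (a - 1) % N = a - 1 := Nat.mod_eq_of_lt (by omega)
      omega
    · intro j _
      have hj := j.isLt
      apply Fin.ext
      show ((j.val + 1 - 1) % N : ℕ) = j.val
      have h1 : j.val + 1 - 1 = j.val := by omega
      rw [h1]
      exact Nat.mod_eq_of_lt hj
    · intro a ha
      rw [Finset.mem_Icc] at ha
      have main : ∀ j : Fin N, j.val = a - 1 →
          ∑ ℓ ∈ Icc 1 (N - 1), (⟪u ℓ (x a), x a - x (a + ℓ)⟫ : ℝ)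
            = ∑ ℓ ∈ Icc 1 (N - 1), ⟪u ℓ (z j), z j - z (j + (ℓ : Fin N))⟫ := by
        intro j hjval
        refine Finset.sum_congr rfl fun ℓ hℓ => ?_
        rw [Finset.mem_Icc] at hℓ
        have hℓN : ℓ < N := by omega
        have hval : (j + (ℓ : Fin N)).val = (j.val + ℓ) % N := by
          rw [Fin.val_add, Fin.val_natCast, Nat.mod_eq_of_lt hℓN]
        have hx1 : x a = z j := by
          rw [hzdef, hjval, show a - 1 + 1 = a from by omega]
        have hx2 : x (a + ℓ) = z (j + (ℓ : Fin N)) := by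
          rw [hzdef]
          by_cases hcase : j.val + ℓ < N
          · rw [hval, Nat.mod_eq_of_lt hcase, hjval,
              show a - 1 + ℓ + 1 = a + ℓ from by omega]
          · have hlt : j.val + ℓ - N < N := by omega
            have hmod : (j.val + ℓ) % N = j.val + ℓ - N := by
              rw [Nat.mod_eq_sub_mod (by omega), Nat.mod_eq_of_lt hlt]
            rw [hval, hmod, hjval]
            have hidx : a + ℓ = N + (a - 1 + ℓ - N + 1) := by omega
            rw [hidx, h2 (a - 1 + ℓ - N + 1) (by omega) (by omega)]
        rw [hx1, hx2]
      exact main _ (Nat.mod_eq_of_lt (by omega))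
  rw [hconv]
  exact hkey
end
end

section
/- Let N ≥ 1, let Ω be a bounded domain in ℝ^d, let μ be a Borel probability measure on Ω, and let u : Ω → ℝ^d be a bounded measurable vector field that is (N+1)-cyclically monotone on Ω. Then for every μ-measure-preserving map S : Ω → Ω with S^N = identity μ-a.e., one has ∫_Ω ⟨u(x), x − Sx⟩ dμ(x) ≥ 0. In other words, every (N+1)-cyclically monotone vector field belongs to the polar set S_N(Ω,μ)^0, so S_{N+1}(Ω,μ)^0 ⊂ S_N(Ω,μ)^0 in the sense of this polarity. -/
open MeasureTheory Finset
open scoped BigOperators RealInnerProductSpace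

noncomputable section

theorem statement16 {d : ℕ} (N : ℕ) (hN : 1 ≤ N)
    (Ω : Set (Ed d)) (hΩopen : IsOpen Ω) (hΩbdd : Bornology.IsBounded Ω)
    (hΩne : Ω.Nonempty)
    -- `μ` is a Borel probability measure on `Ω`
    (μ : Measure (Ed d)) [IsProbabilityMeasure μ] (hμΩ : μ Ωᶜ = 0)
    (u : Ed d → Ed d) (humeas : Measurable u)
    (hubdd : ∃ C : ℝ, ∀ x ∈ Ω, ‖u x‖ ≤ C)
    -- `u` is `(N+1)`-cyclically monotone on `Ω`
    (hmono : NCyclicallyMonotone (N + 1) Ω u)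
    -- `S ∈ S_N(Ω,μ)`
    (S : Ed d → Ed d) (hSpres : MeasurePreserving S μ μ) (hSmaps : Set.MapsTo S Ω Ω)
    (hSinv : ∀ᵐ x ∂μ, S^[N] x = x) :
    -- then `u` belongs to the polar set `S_N(Ω,μ)⁰`
    0 ≤ ∫ x, ⟪u x, x - S x⟫ ∂μ := by
  obtain ⟨C, hC⟩ := hubdd
  obtain ⟨R, hR⟩ := hΩbdd.subset_closedBall 0
  have hSm : Measurable S := hSpres.measurable
  set g : ℕ → Ed d → ℝ := fun i x => ⟪u (S^[i] x), S^[i] x - S^[i+1] x⟫ with hg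
  have hgm : ∀ i, Measurable (g i) := fun i =>
    (humeas.comp (hSm.iterate i)).inner ((hSm.iterate i).sub (hSm.iterate (i+1)))
  have hae : ∀ᵐ x ∂μ, x ∈ Ω := by
    rw [ae_iff]
    exact hμΩ
  have hiter : ∀ i, ∀ x ∈ Ω, S^[i] x ∈ Ω := fun i => hSmaps.iterate i
  have hC0 : 0 ≤ C := le_trans (norm_nonneg _) (hC _ hΩne.choose_spec)
  have hbound : ∀ i, ∀ x ∈ Ω, ‖g i x‖ ≤ C * (2 * R) := by
    intro i x hx
    have h1 : ‖g i x‖ ≤ ‖u (S^[i] x)‖ * ‖S^[i] x - S^[i+1] x‖ := norm_inner_le_norm _ _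
    have h2 : ‖S^[i] x - S^[i+1] x‖ ≤ 2 * R := by
      have ha := hR (hiter i x hx)
      have hb := hR (hiter (i+1) x hx)
      simp only [Metric.mem_closedBall, dist_zero_right] at ha hb
      calc ‖S^[i] x - S^[i+1] x‖ ≤ ‖S^[i] x‖ + ‖S^[i+1] x‖ := norm_sub_le _ _
        _ ≤ 2 * R := by linarith
    calc ‖g i x‖ ≤ ‖u (S^[i] x)‖ * ‖S^[i] x - S^[i+1] x‖ := h1
      _ ≤ C * (2 * R) :=
        mul_le_mul (hC _ (hiter i x hx)) h2 (norm_nonneg _) hC0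
  have hint : ∀ i, Integrable (g i) μ := by
    intro i
    refine (integrable_const (C * (2 * R))).mono' (hgm i).aestronglyMeasurable ?_
    filter_upwards [hae] with x hx using hbound i x hx
  have hint_eq : ∀ i, ∫ x, g i x ∂μ = ∫ x, g 0 x ∂μ := by
    intro i
    have hpres : MeasurePreserving (S^[i]) μ μ := hSpres.iterate i
    have hcomp : g i = fun x => g 0 (S^[i] x) := by
      funext x
      simp [hg, Function.iterate_succ_apply']
    have hmeas : AEStronglyMeasurable (g 0) (Measure.map (S^[i]) μ) := by
      rw [hpres.map_eq]; exact (hgm 0).aestronglyMeasurable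
    have h := integral_map hpres.aemeasurable hmeas
    rw [hpres.map_eq] at h
    rw [hcomp, ← h]
  have hpt : ∀ᵐ x ∂μ, 0 ≤ ∑ i ∈ range N, g i x := by
    filter_upwards [hae, hSinv] with x hx hfix
    set y : ℕ → Ed d := fun i => if i ≤ N then S^[i-1] x else x with hy
    have hmem : ∀ i, 1 ≤ i → i ≤ N + 1 → y i ∈ Ω := by
      intro i h1 h2
      by_cases h : i ≤ N
      · simpa [hy, h] using hiter (i-1) x hx
      · simpa [hy, h] using hx
    have hyN1 : y (N + 1) = x := if_neg (by omega)
    have hyN2 : y (N + 1 + 1) = x := if_neg (by omega)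
    have hy1 : y 1 = x := by
      have : y 1 = S^[1-1] x := if_pos (by omega)
      simpa using this
    have hcyc : y (N + 1 + 1) = y 1 := by rw [hyN2, hy1]
    have hineq := hmono y hmem hcyc
    rw [Finset.sum_Icc_succ_top (by omega : 1 ≤ N + 1)] at hineq
    have hlast : ⟪u (y (N + 1)), y (N + 1) - y (N + 1 + 1)⟫ = 0 := by
      rw [hyN1, hyN2, sub_self, inner_zero_right]
    rw [hlast, add_zero] at hineq
    have hrw : ∑ i ∈ Icc 1 N, ⟪u (y i), y i - y (i + 1)⟫ = ∑ i ∈ range N, g i x := by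
      rw [← Finset.Ico_add_one_right_eq_Icc, Finset.sum_Ico_eq_sum_range]
      apply Finset.sum_congr rfl
      intro i hi
      rw [Finset.mem_range] at hi
      have h1 : y (1 + i) = S^[i] x := by
        have h : y (1 + i) = S^[1 + i - 1] x := if_pos (by omega)
        rw [h, (by omega : 1 + i - 1 = i)]
      have h2 : y (1 + i + 1) = S^[i+1] x := by
        by_cases h : 1 + i + 1 ≤ N
        · have h' : y (1 + i + 1) = S^[1 + i + 1 - 1] x := if_pos h
          rw [h', (by omega : 1 + i + 1 - 1 = i + 1)]
        · have h' : y (1 + i + 1) = x := if_neg h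
          rw [h', (by omega : i + 1 = N), hfix]
      rw [h1, h2]
    rw [hrw] at hineq
    exact hineq
  have h1 : 0 ≤ ∫ x, ∑ i ∈ range N, g i x ∂μ := integral_nonneg_of_ae hpt
  rw [integral_finset_sum _ (fun i _ => hint i)] at h1
  simp_rw [hint_eq] at h1
  rw [Finset.sum_const, card_range, nsmul_eq_mul] at h1
  have hI : 0 ≤ ∫ x, g 0 x ∂μ := by
    have hNpos : (0:ℝ) < N := by exact_mod_cast hN
    nlinarith
  have : (fun x => g 0 x) = fun x => ⟪u x, x - S x⟫ := by
    funext x; simp [hg]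
  rwa [this] at hI
end
end

section
/- Let N ≥ 2, let Ω ⊂ ℝ^d, and let u : Ω → ℝ^d. The (N−1)-tuple (u, u, …, u) consisting of N−1 copies of u is jointly N-monotone if and only if u is 2-cyclically monotone, i.e. ⟨u(x) − u(y), x − y⟩ ≥ 0 for all x, y ∈ Ω. -/
open MeasureTheory Finset
open scoped BigOperators RealInnerProductSpace

noncomputable section

theorem statement17 {d : ℕ} (N : ℕ) (hN : 2 ≤ N)
    (Ω : Set (Ed d)) (u : Ed d → Ed d) :
    JointlyNMonotone N Ω (fun _ => u) ↔
      (∀ x ∈ Ω, ∀ y ∈ Ω, 0 ≤ ⟪u x - u y, x - y⟫) := by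
  have hmod : ∀ m, 2 ≤ m → m ≤ 2*N-1 → (m % N = 1 ↔ m = N+1) := by
    intro m h2 h3
    rcases lt_or_ge m N with hm | hm
    · rw [Nat.mod_eq_of_lt hm]; omega
    · rw [Nat.mod_eq_sub_mod hm, Nat.mod_eq_of_lt (by omega : m - N < N)]; omega
  constructor
  · intro h a ha b hb
    set x : ℕ → Ed d := fun i => if i % N = 1 then a else b with hxdef
    have hx1 : x 1 = a := by simp [hxdef, Nat.mod_eq_of_lt (by omega : 1 < N)]
    have hxb : ∀ i, i % N ≠ 1 → x i = b := by intro i hi; simp [hxdef, hi]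
    have h1 := h x (fun i _ _ => by by_cases hc : i % N = 1 <;> simp [hxdef, hc, ha, hb])
      (fun i hi1 hi2 => by simp [hxdef, Nat.add_mod_left])
    simp only at h1
    have e1 : ∀ ℓ ∈ Icc 1 (N-1), (⟪u (x 1), x 1 - x (1 + ℓ)⟫ : ℝ) = ⟪u a, a - b⟫ := by
      intro ℓ hℓ
      rw [mem_Icc] at hℓ
      have h2 : x (1+ℓ) = b := hxb _ fun hc => by
        have := (hmod (1+ℓ) (by omega) (by omega)).mp hc; omega
      rw [hx1, h2]
    have e2 : ∀ i ∈ Icc 2 N, (∑ ℓ ∈ Icc 1 (N-1), ⟪u (x i), x i - x (i + ℓ)⟫ : ℝ)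
        = ⟪u b, b - a⟫ := by
      intro i hi; rw [mem_Icc] at hi
      have hxi : x i = b := hxb i fun hc => by
        have := (hmod i (by omega) (by omega)).mp hc; omega
      rw [Finset.sum_eq_single (N+1-i)]
      · have hii : i + (N+1-i) = N+1 := by omega
        have hxN1 : x (N+1) = a := by
          simp [hxdef, Nat.add_mod_left, Nat.mod_eq_of_lt (by omega : 1 < N)]
        rw [hxi, hii, hxN1]
      · intro ℓ hℓ hne; rw [mem_Icc] at hℓ
        have hxil : x (i+ℓ) = b := hxb _ fun hc => by
          have := (hmod (i+ℓ) (by omega) (by omega)).mp hc; omega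
        rw [hxi, hxil, sub_self, inner_zero_right]
      · intro hmem
        exact absurd (mem_Icc.mpr ⟨by omega, by omega⟩) hmem
    have split : Icc 1 N = insert 1 (Icc 2 N) := by
      ext k; simp only [mem_Icc, mem_insert]; omega
    rw [split, Finset.sum_insert (by simp), Finset.sum_congr rfl e1,
      Finset.sum_congr rfl e2, Finset.sum_const, Finset.sum_const,
      Nat.card_Icc, Nat.card_Icc, nsmul_eq_mul, nsmul_eq_mul] at h1
    have hinner : (⟪u a, a - b⟫ + ⟪u b, b - a⟫ : ℝ) = ⟪u a - u b, a - b⟫ := by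
      simp only [inner_sub_left, inner_sub_right]; ring
    have hpos : (0:ℝ) < ((N - 1 + 1 - 1 : ℕ) : ℝ) := by
      have : 1 ≤ N - 1 + 1 - 1 := by omega
      exact_mod_cast Nat.lt_of_lt_of_le Nat.zero_lt_one this
    have hcast : (N - 1 + 1 - 1 : ℕ) = (N + 1 - 2 : ℕ) := by omega
    rw [hcast] at h1 hpos
    nlinarith [h1, hpos, hinner]
  · intro h x hΩ hper
    simp only
    set f : ℕ → ℕ → ℝ := fun i j => ⟪u (x i), x i - x j⟫ with hf
    have step1 : ∀ i ∈ Icc 1 N,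
        (∑ ℓ ∈ Icc 1 (N-1), ⟪u (x i), x i - x (i+ℓ)⟫ : ℝ) = ∑ j ∈ Icc 1 N, f i j := by
      intro i hi; rw [mem_Icc] at hi
      have e : (∑ ℓ ∈ Icc 1 (N-1), ⟪u (x i), x i - x (i+ℓ)⟫ : ℝ)
          = ∑ j ∈ (Icc 1 N).erase i, f i j := by
        refine Finset.sum_nbij' (fun ℓ => if i + ℓ ≤ N then i + ℓ else i + ℓ - N)
          (fun j => if i < j then j - i else j + N - i) ?_ ?_ ?_ ?_ ?_
        · intro ℓ hℓ; rw [mem_Icc] at hℓ; rw [mem_erase, mem_Icc]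
          split_ifs <;> omega
        · intro j hj; rw [mem_erase, mem_Icc] at hj; rw [mem_Icc]
          split_ifs <;> omega
        · intro ℓ hℓ; rw [mem_Icc] at hℓ; split_ifs <;> omega
        · intro j hj; rw [mem_erase, mem_Icc] at hj; split_ifs <;> omega
        · intro ℓ hℓ; rw [mem_Icc] at hℓ
          by_cases hc : i + ℓ ≤ N
          · simp only [hf, if_pos hc]
          · have hx : x (i+ℓ) = x (i+ℓ-N) := by
              have hp := hper (i+ℓ-N) (by omega) (by omega)
              rw [show N + (i+ℓ-N) = i + ℓ from by omega] at hp; exact hp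
            simp only [hf, if_neg hc, hx]
      rw [e, Finset.sum_erase]
      simp [hf]
    have hrw : (∑ i ∈ Icc 1 N, ∑ ℓ ∈ Icc 1 (N-1), ⟪u (x i), x i - x (i+ℓ)⟫ : ℝ)
        = ∑ i ∈ Icc 1 N, ∑ j ∈ Icc 1 N, f i j := Finset.sum_congr rfl step1
    rw [hrw]
    have hkey : ∀ i ∈ Icc 1 N, ∀ j ∈ Icc 1 N, 0 ≤ f i j + f j i := by
      intro i hi j hj; rw [mem_Icc] at hi hj
      have h1 := h (x i) (hΩ i hi.1 (by omega)) (x j) (hΩ j hj.1 (by omega))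
      have he : f i j + f j i = ⟪u (x i) - u (x j), x i - x j⟫ := by
        simp only [hf, inner_sub_left, inner_sub_right]; ring
      rw [he]; exact h1
    have hsymm : ∑ i ∈ Icc 1 N, ∑ j ∈ Icc 1 N, f i j
        = ∑ i ∈ Icc 1 N, ∑ j ∈ Icc 1 N, f j i := Finset.sum_comm
    have h2 : 0 ≤ ∑ i ∈ Icc 1 N, ∑ j ∈ Icc 1 N, (f i j + f j i) :=
      Finset.sum_nonneg fun i hi => Finset.sum_nonneg fun j hj => hkey i hi j hj
    simp only [Finset.sum_add_distrib] at h2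
    linarith [hsymm, h2]
end
end

section
/- Let N ≥ 2, let ℓ ≥ 1 divide N, and let Ω ⊂ ℝ^d. If u : Ω → ℝ^d is (N/ℓ)-cyclically monotone, then u is (N,ℓ)-monotone, i.e. for every cycle x_1,…,x_{N+ℓ} of points in Ω with x_{N+i}=x_i for 1 ≤ i ≤ ℓ, one has ∑_{i=1}^{N} ⟨u(x_i), x_i − x_{i+ℓ}⟩ ≥ 0. -/
open MeasureTheory Finset
open scoped BigOperators RealInnerProductSpace

noncomputable section

/-- `u` is `(N,ℓ)`-monotone on `Ω`: for every cycle `x 1, …, x (N+ℓ)` of points of `Ω`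
with `x (N+i) = x i` for `1 ≤ i ≤ ℓ`, one has `∑_{i=1}^{N} ⟨u (x i), x i - x (i+ℓ)⟩ ≥ 0`. -/
def NellMonotone (N ℓ : ℕ) {d : ℕ} (Ω : Set (Ed d)) (u : Ed d → Ed d) : Prop :=
  ∀ x : ℕ → Ed d,
    (∀ i, 1 ≤ i → i ≤ N + ℓ → x i ∈ Ω) →
    (∀ i, 1 ≤ i → i ≤ ℓ → x (N + i) = x i) →
    0 ≤ ∑ i ∈ Icc 1 N, ⟪u (x i), x i - x (i + ℓ)⟫

theorem statement19 {d : ℕ} (N ℓ : ℕ) (hN : 2 ≤ N) (hℓ : 1 ≤ ℓ) (hdvd : ℓ ∣ N)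
    (Ω : Set (Ed d)) (u : Ed d → Ed d)
    (h : NCyclicallyMonotone (N / ℓ) Ω u) :
    NellMonotone N ℓ Ω u := by
  intro x hx hcyc
  set m := N / ℓ with hm
  have hℓpos : 0 < ℓ := hℓ
  have hmℓ : m * ℓ = N := Nat.div_mul_cancel hdvd
  have hℓN : ℓ ≤ N := Nat.le_of_dvd (by omega) hdvd
  have hm1 : 1 ≤ m := (Nat.one_le_div_iff hℓpos).2 hℓN
  have key : ∀ r, 1 ≤ r → r ≤ ℓ →
      0 ≤ ∑ k ∈ Icc 1 m,
        ⟪u (x (r + (k - 1) * ℓ)), x (r + (k - 1) * ℓ) - x (r + k * ℓ)⟫ := by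
    intro r hr1 hr2
    have hmem : ∀ i, 1 ≤ i → i ≤ m → x (r + (i - 1) * ℓ) ∈ Ω := by
      intro i hi1 hi2
      apply hx
      · omega
      · have h1 : (i - 1) * ℓ ≤ (m - 1) * ℓ := Nat.mul_le_mul_right ℓ (by omega)
        have h2 : (m - 1) * ℓ = N - ℓ := by rw [Nat.sub_mul, hmℓ]; ring_nf
        omega
    have hc : x (r + ((m + 1) - 1) * ℓ) = x (r + (1 - 1) * ℓ) := by
      have : r + ((m + 1) - 1) * ℓ = N + r := by
        simp only [Nat.add_sub_cancel]; omega
      rw [this, hcyc r hr1 hr2]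
      simp
    have := h (fun k => x (r + (k - 1) * ℓ)) hmem hc
    refine le_trans this (le_of_eq (Finset.sum_congr rfl ?_))
    intro k hk
    simp only [Nat.add_sub_cancel]
  have hsum : ∑ i ∈ Icc 1 N, ⟪u (x i), x i - x (i + ℓ)⟫
      = ∑ p ∈ Icc 1 ℓ ×ˢ Icc 1 m,
        ⟪u (x (p.1 + (p.2 - 1) * ℓ)), x (p.1 + (p.2 - 1) * ℓ) - x (p.1 + p.2 * ℓ)⟫ := by
    refine Finset.sum_nbij' (fun i => ((i - 1) % ℓ + 1, (i - 1) / ℓ + 1))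
      (fun p => p.1 + (p.2 - 1) * ℓ) ?_ ?_ ?_ ?_ ?_
    · intro i hi
      simp only [mem_Icc] at hi
      simp only [Finset.mem_product, mem_Icc]
      have h1 : (i - 1) % ℓ < ℓ := Nat.mod_lt _ hℓpos
      have h2 : (i - 1) / ℓ < m := by
        rw [Nat.div_lt_iff_lt_mul hℓpos]
        omega
      exact ⟨⟨Nat.le_add_left 1 _, h1⟩, ⟨Nat.le_add_left 1 _, h2⟩⟩
    · intro p hp
      simp only [Finset.mem_product, mem_Icc] at hp
      simp only [mem_Icc]
      constructor
      · omega
      · have h1 : (p.2 - 1) * ℓ ≤ (m - 1) * ℓ := Nat.mul_le_mul_right ℓ (by omega)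
        have h2 : (m - 1) * ℓ = N - ℓ := by rw [Nat.sub_mul, hmℓ]; ring_nf
        omega
    · intro i hi
      simp only [mem_Icc] at hi
      simp only [Nat.add_sub_cancel]
      have := Nat.mod_add_div' (i - 1) ℓ
      omega
    · intro p hp
      simp only [Finset.mem_product, mem_Icc] at hp
      have h1 : p.1 + (p.2 - 1) * ℓ - 1 = (p.1 - 1) + (p.2 - 1) * ℓ := by omega
      have h2 : ((p.1 - 1) + (p.2 - 1) * ℓ) % ℓ = p.1 - 1 := by
        rw [Nat.add_mul_mod_self_right, Nat.mod_eq_of_lt (by omega)]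
      have h3 : ((p.1 - 1) + (p.2 - 1) * ℓ) / ℓ = p.2 - 1 := by
        rw [Nat.add_mul_div_right _ _ hℓpos, Nat.div_eq_of_lt (by omega)]
        omega
      ext <;> simp only [h1, h2, h3] <;> omega
    · intro i hi
      simp only [mem_Icc] at hi
      have hmd := Nat.mod_add_div' (i - 1) ℓ
      have hsm : ((i - 1) / ℓ + 1) * ℓ = (i - 1) / ℓ * ℓ + ℓ := by ring
      have heq : (i - 1) % ℓ + 1 + ((i - 1) / ℓ + 1 - 1) * ℓ = i := by
        simp only [Nat.add_sub_cancel]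
        omega
      have heq2 : (i - 1) % ℓ + 1 + ((i - 1) / ℓ + 1) * ℓ = i + ℓ := by
        omega
      simp only [heq, heq2]
  rw [hsum, Finset.sum_product]
  exact Finset.sum_nonneg fun r hr => by
    simp only [mem_Icc] at hr
    exact key r hr.1 hr.2
end
end
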